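/- arXiv:1903.07321 — 12 statements merged into one kernel-verified Lean document; each statement's English description precedes it below -/
import Mathlib

section
/- There is no integer $i$ with $0 \le i \le k-1$ such that $d + D \equiv d q^i \pmod{q^k - 1}$; equivalently, $\gamma^{d+D} \ne (\gamma^d)^{q^i}$ for all $0 \le i \le k-1$, so the minimal polynomials of $\gamma^d$ and $\gamma^{d+D}$ over $\mathbb{F}_q$ have no common zero. -/
/-- There is no `0 ≤ i ≤ k-1` with `d + D ≡ d q^i (mod q^k - 1)`; equivalently
`γ^(d+D) ≠ (γ^d)^(q^i)` for all such `i`, so the minimal polynomials of `γ^d`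
and `γ^(d+D)` over `𝔽_q` have no common zero. -/
theorem no_conjugate_zero
    (q k d e D : ℕ)
    (hq : IsPrimePow q) (hk : 1 ≤ k)
    (Fqk : Type) [Field Fqk] [Fintype Fqk]
    (hqk : Fintype.card Fqk = q ^ k)
    (γ : Fqkˣ) (hγ : ∀ x : Fqkˣ, x ∈ Subgroup.zpowers γ)
    (hd : 0 < d) (he : 1 < e)
    (hde : d * e ∣ q - 1)
    (hD : D = (q ^ k - 1) / e) :
    ∀ i : ℕ, i ≤ k - 1 →
      ¬ (d + D ≡ d * q ^ i [MOD q ^ k - 1]) ∧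
      ((γ : Fqk)) ^ (d + D) ≠ (((γ : Fqk)) ^ d) ^ (q ^ i) := by
  intro i hi
  have hq2 : 2 ≤ q := hq.two_le
  set n := q ^ k - 1 with hn
  have hqk1 : 1 < q ^ k := Nat.one_lt_pow (by omega) hq2
  have hnpos : 0 < n := by omega
  have hedvd : e ∣ q - 1 := dvd_trans (dvd_mul_left e d) hde
  have hq1dvd : q - 1 ∣ n := by
    have := Nat.sub_dvd_pow_sub_pow q 1 k
    simpa using this
  have hedvdn : e ∣ n := hedvd.trans hq1dvd
  have heD : e * D = n := by
    rw [hD, Nat.mul_div_cancel' hedvdn]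
  have hepos : 0 < e := by omega
  have hDpos : 0 < D := by
    rw [hD]
    exact Nat.div_pos (Nat.le_of_dvd hnpos hedvdn) hepos
  have hDlt : D < n := by
    rw [hD]
    exact Nat.div_lt_self hnpos he
  -- key arithmetic facts
  have hqi1 : 1 ≤ q ^ i := Nat.one_le_pow _ _ (by omega)
  have hedle : d * e ≤ q - 1 := Nat.le_of_dvd (by omega) hde
  have hmain : ¬ (d + D ≡ d * q ^ i [MOD n]) := by
    intro h
    have h2 : e * (d + D) ≡ e * (d * q ^ i) [MOD n] := h.mul_left e
    have h3 : e * d + n ≡ e * (d * q ^ i) [MOD n] := by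
      calc e * d + n = e * (d + D) := by rw [Nat.mul_add, heD]
        _ ≡ e * (d * q ^ i) [MOD n] := h2
    have h4 : e * d ≡ e * d * q ^ i [MOD n] := by
      have : e * d + n ≡ e * d + 0 [MOD n] := Nat.ModEq.add_left _ (Nat.modEq_zero_iff_dvd.mpr dvd_rfl)
      have h5 := (this.symm.trans h3)
      simpa [Nat.mul_assoc] using h5
    have hle : e * d ≤ e * d * q ^ i := Nat.le_mul_of_pos_right _ (by omega)
    have hdvd : n ∣ e * d * q ^ i - e * d := (Nat.modEq_iff_dvd' hle).mp h4
    have heq : e * d * q ^ i - e * d = e * d * (q ^ i - 1) := by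
      rw [Nat.mul_sub, Nat.mul_one]
    rw [heq] at hdvd
    -- bound: e*d*(q^i - 1) < n
    have hqi_le : q ^ i ≤ q ^ (k - 1) := Nat.pow_le_pow_right (by omega) hi
    have hqk_eq : q ^ k = q * q ^ (k - 1) := by
      conv_lhs => rw [show k = 1 + (k - 1) by omega]
      rw [pow_add, pow_one]
    have hbound : e * d * (q ^ i - 1) < n := by
      have h1 : e * d * (q ^ i - 1) ≤ (q - 1) * (q ^ (k - 1) - 1) := by
        apply Nat.mul_le_mul
        · rw [mul_comm]; exact hedle
        · omega
      have ha : 1 ≤ q ^ (k - 1) := Nat.one_le_pow _ _ (by omega)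
      have h2 : (q - 1) * (q ^ (k - 1) - 1) < q * q ^ (k - 1) - 1 := by
        set a := q ^ (k - 1)
        zify [ha, show 1 ≤ q by omega, show 1 ≤ q * a from Nat.one_le_iff_ne_zero.mpr (by positivity)]
        nlinarith
      have h2' : (q - 1) * (q ^ (k - 1) - 1) < n := by
        rw [hn, hqk_eq]; exact h2
      exact lt_of_le_of_lt h1 h2'
    have hzero : e * d * (q ^ i - 1) = 0 := by
      by_contra hne
      exact absurd (Nat.le_of_dvd (Nat.pos_of_ne_zero hne) hdvd) (by omega)
    have hi0 : q ^ i = 1 := by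
      have : q ^ i - 1 = 0 := by
        rcases Nat.mul_eq_zero.mp hzero with h | h
        · rcases Nat.mul_eq_zero.mp h with h' | h' <;> omega
        · exact h
      omega
    -- then n ∣ D, contradiction
    rw [hi0, Nat.mul_one] at h
    have hdvdD : n ∣ d + D - d := (Nat.modEq_iff_dvd' (Nat.le_add_right d D)).mp h.symm
    simp only [Nat.add_sub_cancel_left] at hdvdD
    exact absurd (Nat.le_of_dvd hDpos hdvdD) (by omega)
  refine ⟨hmain, ?_⟩
  intro heq
  apply hmain
  have hord : orderOf γ = n := by
    rw [orderOf_eq_card_of_forall_mem_zpowers hγ, Nat.card_units,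
      Nat.card_eq_fintype_card, hqk]
  have heq' : γ ^ (d + D) = γ ^ (d * q ^ i) := by
    apply Units.ext
    push_cast
    rw [pow_mul]
    exact heq
  have := (pow_eq_pow_iff_modEq.mp heq')
  rwa [hord] at this
end

section
/- The minimal polynomial of $\gamma^d$ over $\mathbb{F}_q$ has degree $k$; equivalently, $\mathbb{F}_q(\gamma^d) = \mathbb{F}_{q^k}$, i.e. the smallest positive integer $h$ such that $d q^h \equiv d \pmod{q^k-1}$ is $h = k$. -/
open FiniteDimensional IntermediateField

/-- The minimal polynomial of `γ^d` over `𝔽_q` has degree `k`; equivalently, the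
smallest positive integer `h` with `d q^h ≡ d (mod q^k - 1)` is `h = k`. -/
theorem minpoly_gamma_pow_d_degree
    (q k d e : ℕ)
    (hq : IsPrimePow q) (hk : 1 ≤ k)
    (Fq Fqk : Type) [Field Fq] [Field Fqk] [Fintype Fq] [Fintype Fqk]
    [Algebra Fq Fqk]
    (hcard : Fintype.card Fq = q)
    (hqk : Fintype.card Fqk = q ^ k)
    (γ : Fqkˣ) (hγ : ∀ x : Fqkˣ, x ∈ Subgroup.zpowers γ)
    (hd : 0 < d) (he : 1 < e)
    (hde : d * e ∣ q - 1) :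
    (minpoly Fq ((γ : Fqk) ^ d)).natDegree = k ∧
    IsLeast {h : ℕ | 0 < h ∧ d * q ^ h ≡ d [MOD q ^ k - 1]} k := by
  classical
  have hq2 : 2 ≤ q := hq.two_le
  have hqk1 : 1 ≤ q ^ k := Nat.one_le_pow _ _ (by omega)
  have hmem : d * q ^ k ≡ d [MOD q ^ k - 1] := by
    have h1 : (1 : ℕ) ≡ q ^ k [MOD q ^ k - 1] :=
      (Nat.modEq_iff_dvd' hqk1).mpr dvd_rfl
    simpa using (h1.symm.mul_left d)
  have hlb : ∀ h ∈ {h : ℕ | 0 < h ∧ d * q ^ h ≡ d [MOD q ^ k - 1]}, k ≤ h := by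
    rintro h ⟨hh0, hmod⟩
    by_contra hlt
    push_neg at hlt
    have hhk : h ≤ k - 1 := by omega
    have hqh1 : 2 ≤ q ^ h := by
      calc 2 ≤ q := hq2
      _ = q ^ 1 := (pow_one q).symm
      _ ≤ q ^ h := Nat.pow_le_pow_right (by omega) hh0
    have hdle : d ≤ d * q ^ h := Nat.le_mul_of_pos_right d (by omega)
    have hdvd : q ^ k - 1 ∣ d * q ^ h - d := (Nat.modEq_iff_dvd' hdle).mp hmod.symm
    have heq : d * q ^ h - d = d * (q ^ h - 1) := by
      rw [Nat.mul_sub, mul_one]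
    have hpos : 0 < d * (q ^ h - 1) := Nat.mul_pos hd (by omega)
    have hle : q ^ k - 1 ≤ d * (q ^ h - 1) := Nat.le_of_dvd hpos (heq ▸ hdvd)
    have hde' : d * e ≤ q - 1 := Nat.le_of_dvd (by omega) hde
    have h2d : 2 * d ≤ q - 1 := le_trans (by nlinarith) hde'
    have hAB : q ^ h ≤ q ^ (k - 1) := Nat.pow_le_pow_right (by omega) hhk
    have hB1 : 1 ≤ q ^ (k - 1) := Nat.one_le_pow _ _ (by omega)
    have hqk' : q ^ k = q * q ^ (k - 1) := by
      conv_lhs => rw [show k = 1 + (k - 1) by omega, pow_add, pow_one]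
    rw [hqk'] at hle
    zify [show (1:ℕ) ≤ q ^ h by omega, show (1:ℕ) ≤ q by omega,
      show (1:ℕ) ≤ q * q ^ (k-1) by nlinarith] at hle h2d
    nlinarith [mul_le_mul_of_nonneg_right h2d (by positivity : (0:ℤ) ≤ ((q ^ (k-1) : ℕ) : ℤ)),
      mul_le_mul_of_nonneg_left (by exact_mod_cast hAB : ((q^h : ℕ):ℤ) ≤ ((q^(k-1):ℕ):ℤ)) (by positivity : (0:ℤ) ≤ (d:ℤ)),
      hd, hB1]
  have hfin : FiniteDimensional Fq Fqk := Module.Finite.of_finite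
  have hrank : Module.finrank Fq Fqk = k := by
    have h1 := Module.card_eq_pow_finrank (K := Fq) (V := Fqk)
    rw [hcard, hqk] at h1
    exact (Nat.pow_right_injective hq2 h1).symm
  set α : Fqk := (γ : Fqk) ^ d with hα
  have hint : IsIntegral Fq α := .of_finite Fq α
  have hm_le : (minpoly Fq α).natDegree ≤ k := hrank ▸ minpoly.natDegree_le α
  have hm_pos : 0 < (minpoly Fq α).natDegree := minpoly.natDegree_pos hint
  set m := (minpoly Fq α).natDegree with hm
  haveI : Fintype (Fq⟮α⟯) := Fintype.ofFinite _
  have hEcard : Fintype.card (Fq⟮α⟯) = q ^ m := by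
    have h1 := Module.card_eq_pow_finrank (K := Fq) (V := Fq⟮α⟯)
    rw [hcard, IntermediateField.adjoin.finrank hint] at h1
    exact h1
  have hgen := FiniteField.pow_card (IntermediateField.AdjoinSimple.gen Fq α)
  rw [hEcard] at hgen
  have hαpow : α ^ q ^ m = α := by
    have h2 := congrArg (algebraMap (Fq⟮α⟯) Fqk) hgen
    simpa using h2
  have hord : orderOf γ = q ^ k - 1 := by
    rw [orderOf_eq_card_of_forall_mem_zpowers hγ, Nat.card_eq_fintype_card, Fintype.card_units, hqk]
  have hu : γ ^ (d * q ^ m) = γ ^ d := by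
    apply Units.ext
    push_cast
    rw [pow_mul]
    exact hαpow
  have hmod : d * q ^ m ≡ d [MOD q ^ k - 1] := by
    rw [← hord]
    exact (pow_eq_pow_iff_modEq).mp hu
  have hk_le : k ≤ m := hlb m ⟨by omega, hmod⟩
  exact ⟨le_antisymm hm_le hk_le, ⟨⟨by omega, hmem⟩, hlb⟩⟩
end

section
/- The greatest common divisor $\gcd(q^k-1, d+D)$ divides $de$, and the minimal polynomial of $\gamma^{d+D}$ over $\mathbb{F}_q$ has degree $k$; equivalently, $\mathbb{F}_q(\gamma^{d+D}) = \mathbb{F}_{q^k}$. -/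
/-- `gcd(q^k - 1, d + D)` divides `d·e`, and the minimal polynomial of `γ^(d+D)`
over `𝔽_q` has degree `k`. -/
theorem minpoly_gamma_pow_dD_degree
    (q k d e D : ℕ)
    (hq : IsPrimePow q) (hk : 1 ≤ k)
    (Fq Fqk : Type) [Field Fq] [Field Fqk] [Fintype Fq] [Fintype Fqk]
    [Algebra Fq Fqk]
    (hcard : Fintype.card Fq = q)
    (hqk : Fintype.card Fqk = q ^ k)
    (γ : Fqkˣ) (hγ : ∀ x : Fqkˣ, x ∈ Subgroup.zpowers γ)
    (hd : 0 < d) (he : 1 < e)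
    (hde : d * e ∣ q - 1)
    (hD : D = (q ^ k - 1) / e) :
    Nat.gcd (q ^ k - 1) (d + D) ∣ d * e ∧
    (minpoly Fq ((γ : Fqk) ^ (d + D))).natDegree = k := by
  have hq2 : 2 ≤ q := hq.two_le
  have hqk2 : 2 ≤ q ^ k := by
    calc 2 = 2 ^ 1 := rfl
    _ ≤ q ^ k := Nat.pow_le_pow_left hq2 1 |>.trans (Nat.pow_le_pow_right (by omega) hk)
  set N := q ^ k - 1 with hN
  have hN0 : 0 < N := by omega
  have heq1 : e ∣ q - 1 := (dvd_mul_left e d).trans hde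
  have hq1N : (q - 1) ∣ N := by simpa using Nat.sub_dvd_pow_sub_pow q 1 k
  have heN : e ∣ N := heq1.trans hq1N
  have heD : e * D = N := by rw [hD]; exact Nat.mul_div_cancel' heN
  set g := Nat.gcd N (d + D) with hg
  have hgN : g ∣ N := Nat.gcd_dvd_left _ _
  have hgde : g ∣ d * e := by
    have h1 : g ∣ e * d + N := by
      have : g ∣ e * (d + D) := (Nat.gcd_dvd_right _ _).mul_left e
      rwa [mul_add, heD] at this
    have h2 : g ∣ e * d + N - N := Nat.dvd_sub h1 hgN
    simpa [Nat.add_sub_cancel, mul_comm] using h2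
  refine ⟨hgde, ?_⟩
  -- basic setup
  set β : Fqk := (γ : Fqk) ^ (d + D) with hβdef
  have hβint : IsIntegral Fq β := IsIntegral.of_finite Fq β
  have hfinrank : Module.finrank Fq Fqk = k := by
    have h := Module.card_eq_pow_finrank (K := Fq) (V := Fqk)
    rw [hqk, hcard] at h
    exact (Nat.pow_right_injective hq2 h.symm)
  set j := (minpoly Fq β).natDegree with hj
  have hjk : j ≤ k := hfinrank ▸ minpoly.natDegree_le β
  have hj1 : 1 ≤ j := minpoly.natDegree_pos hβint
  -- order of β
  have hcardu : Nat.card Fqkˣ = N := by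
    rw [Nat.card_units, Nat.card_eq_fintype_card, hqk]
  have hγord : orderOf γ = N := by
    rw [orderOf_eq_card_of_forall_mem_zpowers hγ, hcardu]
  have hβord : orderOf β = N / g := by
    rw [hβdef, ← Units.val_pow_eq_pow_val, orderOf_units, orderOf_pow, hγord]
  -- lower bound on the order
  have hg0 : 0 < g := Nat.gcd_pos_of_pos_left _ hN0
  have hgle : g ≤ q - 1 := Nat.le_of_dvd (by omega) (hgde.trans hde)
  have hqk1 : q ^ (k - 1) * q = q ^ k := by
    rw [← pow_succ]; congr 1; omega
  have hlow : q ^ (k - 1) ≤ N / g := by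
    apply (Nat.le_div_iff_mul_le hg0).mpr
    calc q ^ (k - 1) * g ≤ q ^ (k - 1) * (q - 1) := Nat.mul_le_mul_left _ hgle
    _ ≤ N := by
        have h1 : 1 ≤ q ^ (k - 1) := Nat.one_le_pow _ _ (by omega)
        have : q ^ (k - 1) * (q - 1) = q ^ (k - 1) * q - q ^ (k - 1) := by
          rw [Nat.mul_sub, mul_one]
        omega
  -- β lies in the subfield Fq⟮β⟯ of cardinality q ^ j
  have hβF : β ∈ IntermediateField.adjoin Fq {β} :=
    IntermediateField.mem_adjoin_simple_self Fq β
  set F := IntermediateField.adjoin Fq {β} with hF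
  haveI : Fintype F := Fintype.ofFinite F
  have hFcard : Fintype.card F = q ^ j := by
    rw [Module.card_eq_pow_finrank (K := Fq) (V := F), hcard, hj, hF,
      IntermediateField.adjoin.finrank hβint]
  have hβ0 : β ≠ 0 := by
    rw [hβdef, ← Units.val_pow_eq_pow_val]; exact Units.ne_zero _
  have hx0 : (⟨β, hβF⟩ : F) ≠ 0 := by
    intro h
    exact hβ0 (congrArg Subtype.val h)
  have hpow : (⟨β, hβF⟩ : F) ^ (Fintype.card F - 1) = 1 :=
    FiniteField.pow_card_sub_one_eq_one _ hx0
  have hβpow : β ^ (q ^ j - 1) = 1 := by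
    have := congrArg (Subtype.val : F → Fqk) hpow
    rwa [SubmonoidClass.coe_pow, hFcard] at this
  have hdvd : N / g ∣ q ^ j - 1 := hβord ▸ orderOf_dvd_of_pow_eq_one hβpow
  -- conclude j = k
  by_contra hne
  have hjlt : j ≤ k - 1 := by omega
  have hqj1 : 0 < q ^ j - 1 := by
    have : 2 ≤ q ^ j := by
      calc 2 = 2 ^ 1 := rfl
      _ ≤ q ^ j := (Nat.pow_le_pow_left hq2 1).trans (Nat.pow_le_pow_right (by omega) hj1)
    omega
  have hle : N / g ≤ q ^ j - 1 := Nat.le_of_dvd hqj1 hdvd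
  have : q ^ j ≤ q ^ (k - 1) := Nat.pow_le_pow_right (by omega) hjlt
  omega
end

section
/- The $\mathbb{F}_q$-linear map $\mathbb{F}_{q^k} \times \mathbb{F}_{q^k} \to \mathbb{F}_q^n$ sending $(u,v)$ to the codeword $c_{u,v} = (\mathrm{Tr}(u\beta^{di} + v\beta^{(d+D)i}))_{i=0}^{n-1}$ is injective; consequently the code $C = \{c_{u,v} : u,v \in \mathbb{F}_{q^k}\}$ has exactly $q^{2k}$ codewords, i.e. $C$ is an $[n, 2k]$ linear code over $\mathbb{F}_q$. -/
open Finset Polynomial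

lemma trace_eq_sum_frobenius (q k : ℕ) (Fq Fqk : Type) [Field Fq] [Field Fqk]
    [Fintype Fq] [Fintype Fqk] [Algebra Fq Fqk]
    (hq : Fintype.card Fq = q) (hqk : Fintype.card Fqk = q ^ k) (y : Fqk) :
    algebraMap Fq Fqk (Algebra.trace Fq Fqk y) = ∑ j ∈ Finset.range k, y ^ q ^ j := by
  classical
  have hq2 : 2 ≤ q := hq ▸ Fintype.one_lt_card
  have hk1 : 1 ≤ k := by
    by_contra h
    have : k = 0 := by omega
    rw [this, pow_zero] at hqk
    have := Fintype.one_lt_card (α := Fqk)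
    omega
  haveI : FiniteDimensional Fq Fqk := by infer_instance
  have hfr : Module.finrank Fq Fqk = k := by
    have h1 : Fintype.card Fqk = Fintype.card Fq ^ Module.finrank Fq Fqk :=
      Module.card_eq_pow_finrank
    rw [hq, hqk] at h1
    exact (Nat.pow_right_injective hq2 h1).symm
  -- characteristic
  obtain ⟨p, hp⟩ := CharP.exists Fq
  haveI := hp
  obtain ⟨r, hpprime, hcard⟩ := FiniteField.card Fq p
  haveI : Fact p.Prime := ⟨hpprime⟩
  haveI : CharP Fqk p := charP_of_injective_algebraMap (algebraMap Fq Fqk).injective p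
  have hqpr : q = p ^ (r : ℕ) := by rw [← hq, hcard]
  have hmapadd : ∀ (j : ℕ) (x y : Fqk), (x + y) ^ q ^ j = x ^ q ^ j + y ^ q ^ j := by
    intro j x y
    rw [hqpr, ← pow_mul]
    exact add_pow_char_pow (R := Fqk) (p := p) x y (↑r * j)
  have hcomm : ∀ (j : ℕ) (a : Fq), (algebraMap Fq Fqk a) ^ q ^ j = algebraMap Fq Fqk a := by
    intro j a
    rw [← map_pow]
    congr 1
    have := FiniteField.pow_card_pow j a
    rwa [hq] at this
  let σf : ℕ → (Fqk →ₐ[Fq] Fqk) := fun j =>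
    { toFun := fun x => x ^ q ^ j
      map_one' := one_pow _
      map_mul' := fun x y => mul_pow x y _
      map_zero' := zero_pow (by positivity)
      map_add' := fun x y => hmapadd j x y
      commutes' := fun a => hcomm j a }
  let σ : Fin k → (Fqk ≃ₐ[Fq] Fqk) := fun j =>
    AlgEquiv.ofBijective (σf (j : ℕ))
      (Finite.injective_iff_bijective.1 (σf (j : ℕ)).toRingHom.injective)
  have hσapp : ∀ (j : Fin k) (x : Fqk), σ j x = x ^ q ^ (j : ℕ) := fun j x => rfl
  have hσinj : Function.Injective σ := by
    rcases eq_or_lt_of_le hk1 with hk1' | hk2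
    · intro i j _
      have : Subsingleton (Fin k) := by rw [← hk1']; infer_instance
      exact Subsingleton.elim i j
    · -- k ≥ 2
      obtain ⟨g, hg⟩ := IsCyclic.exists_generator (α := Fqkˣ)
      have hog : orderOf g = q ^ k - 1 := by
        rw [orderOf_eq_card_of_forall_mem_zpowers hg, Nat.card_eq_fintype_card, Fintype.card_units, hqk]
      have hlt : ∀ i : Fin k, q ^ (i : ℕ) < orderOf g := by
        intro i
        rw [hog]
        have h1 : q ^ (i : ℕ) ≤ q ^ (k - 1) := Nat.pow_le_pow_right (by omega) (by omega)
        have h2 : q ^ (k - 1) * 2 ≤ q ^ (k - 1) * q := Nat.mul_le_mul_left _ hq2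
        have h3 : q ^ (k - 1) * q = q ^ k := by
          rw [← pow_succ]
          congr 1
          omega
        have h4 : 1 ≤ q ^ (k-1) := Nat.one_le_pow _ _ (by omega)
        have h5 : q ≤ q ^ (k - 1) := Nat.le_self_pow (by omega) q
        omega
      intro i j hij
      have h1 : (g : Fqk) ^ q ^ (i : ℕ) = (g : Fqk) ^ q ^ (j : ℕ) := by
        have := congrArg (fun (e : Fqk ≃ₐ[Fq] Fqk) => e (g : Fqk)) hij
        simpa [hσapp] using this
      have h2 : g ^ q ^ (i : ℕ) = g ^ q ^ (j : ℕ) := by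
        apply Units.ext
        simpa [Units.val_pow_eq_pow_val] using h1
      have h3 : q ^ (i : ℕ) = q ^ (j : ℕ) :=
        pow_injOn_Iio_orderOf (x := g) (Set.mem_Iio.2 (hlt i)) (Set.mem_Iio.2 (hlt j)) h2
      exact Fin.ext (Nat.pow_right_injective hq2 h3)
  have hσbij : Function.Bijective σ := by
    rw [Fintype.bijective_iff_injective_and_card]
    refine ⟨hσinj, ?_⟩
    rw [Fintype.card_fin, ← Nat.card_eq_fintype_card, IsGalois.card_aut_eq_finrank, hfr]
  rw [trace_eq_sum_automorphisms]
  rw [← Fintype.sum_bijective σ hσbij (fun j : Fin k => y ^ q ^ (j : ℕ)) _ (fun j => (hσapp j y).symm)]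
  exact Fin.sum_univ_eq_sum_range (fun j => y ^ q ^ j) k


lemma exponents_distinct (q k d e s t : ℕ) (hq2 : 2 ≤ q) (hk : 1 ≤ k) (hd : 0 < d)
    (he : 2 ≤ e) (hde : d * e ∣ q - 1) (hdt : d * t = q ^ k - 1) (hst : e * s = t) :
    (∀ i j, i < k → j < k → q ^ i % t = q ^ j % t → i = j) ∧
    (∀ i j, i < k → j < k → ((1+s) * q ^ i) % t = ((1+s) * q ^ j) % t → i = j) ∧
    (∀ i j, i < k → j < k → q ^ i % t ≠ ((1+s) * q ^ j) % t) := by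
  have hqk1 : 2 ≤ q ^ k := by
    calc 2 ≤ q := hq2
    _ = q ^ 1 := (pow_one q).symm
    _ ≤ q ^ k := Nat.pow_le_pow_right (by omega) hk
  have hde_le : d * e ≤ q - 1 := Nat.le_of_dvd (by omega) hde
  have htpos : 0 < t := by
    rcases Nat.eq_zero_or_pos t with h | h
    · rw [h, Nat.mul_zero] at hdt; omega
    · exact h
  have hspos : 0 < s := by
    rcases Nat.eq_zero_or_pos s with h | h
    · rw [h, Nat.mul_zero] at hst; omega
    · exact h
  have ht_dvd : t ∣ q ^ k - 1 := hdt ▸ dvd_mul_left t d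
  have hcopq : Nat.Coprime t q := by
    have c1 : Nat.gcd t q ∣ q ^ k := (Nat.gcd_dvd_right t q).trans (dvd_pow_self q (by omega))
    have c2 : Nat.gcd t q ∣ q ^ k - 1 := (Nat.gcd_dvd_left t q).trans ht_dvd
    have c3 : Nat.gcd t q ∣ 1 := by
      have := Nat.dvd_sub c1 c2
      rwa [show q ^ k - (q ^ k - 1) = 1 by omega] at this
    exact Nat.dvd_one.mp c3
  have hcop : ∀ i : ℕ, Nat.gcd t (q ^ i) = 1 := fun i => Nat.Coprime.pow_right i hcopq
  set X := q ^ (k - 1) with hX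
  have hXpos : 1 ≤ X := Nat.one_le_pow _ _ (by omega)
  have e1 : X * q = q ^ k := by rw [hX, ← pow_succ]; congr 1; omega
  have c3 : (q - 1) * X + X = q ^ k := by
    have : (q - 1) * X + X = ((q - 1) + 1) * X := by ring
    rw [this, show (q - 1) + 1 = q by omega, mul_comm, e1]
  have hB : 2 * X ≤ t := by
    have c1 : d * 2 ≤ d * e := Nat.mul_le_mul_left d he
    have c2 : (d * e) * X ≤ (q - 1) * X := Nat.mul_le_mul_right X hde_le
    have c4 : d * (2 * X) ≤ d * t := by
      calc d * (2 * X) = (d * 2) * X := by ring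
        _ ≤ (d * e) * X := Nat.mul_le_mul_right X c1
        _ ≤ (q - 1) * X := c2
        _ ≤ q ^ k - 1 := by omega
        _ = d * t := hdt.symm
    exact Nat.le_of_mul_le_mul_left c4 hd
  have hdes : (d * e) * s = q ^ k - 1 := by rw [mul_assoc, hst, hdt]
  have hsB : X ≤ s := by
    have c5 : (d * e) * s ≤ (q - 1) * s := Nat.mul_le_mul_right s hde_le
    have c6 : (q - 1) * X ≤ (q - 1) * s := by omega
    exact Nat.le_of_mul_le_mul_left c6 (by omega)
  -- part (a)
  have keya : ∀ i j, i < k → j < k → i ≤ j → q ^ i % t = q ^ j % t → i = j := by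
    intro i j hi hj hij hmod
    rcases Nat.eq_or_lt_of_le hij with rfl | hlt
    · rfl
    exfalso
    have h1 : q ^ j = q ^ i * q ^ (j - i) := by rw [← pow_add]; congr 1; omega
    have h2 : q ^ i * 1 ≡ q ^ i * q ^ (j - i) [MOD t] := by
      rw [mul_one, ← h1]; exact hmod
    have h3 : 1 ≡ q ^ (j - i) [MOD t] := Nat.ModEq.cancel_left_of_coprime (hcop i) h2
    have h4 : t ∣ q ^ (j - i) - 1 :=
      (Nat.modEq_iff_dvd' (Nat.one_le_pow _ _ (by omega))).1 h3
    have h5 : q ^ (j - i) ≤ X := Nat.pow_le_pow_right (by omega) (by omega)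
    have h6 : q ^ 1 ≤ q ^ (j - i) := Nat.pow_le_pow_right (by omega) (by omega)
    rw [pow_one] at h6
    have h7 : t ≤ q ^ (j - i) - 1 := Nat.le_of_dvd (by omega) h4
    omega
  -- part (b)
  have keyb : ∀ i j, i < k → j < k → i ≤ j →
      ((1+s) * q ^ i) % t = ((1+s) * q ^ j) % t → i = j := by
    intro i j hi hj hij hmod
    rcases Nat.eq_or_lt_of_le hij with rfl | hlt
    · rfl
    exfalso
    set m := j - i with hm
    have h1 : q ^ j = q ^ i * q ^ m := by rw [← pow_add]; congr 1; omega
    have h2 : q ^ i * (1+s) ≡ q ^ i * ((1+s) * q ^ m) [MOD t] := by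
      have e2 : q ^ i * (1+s) = (1+s) * q ^ i := by ring
      have e3 : q ^ i * ((1+s) * q ^ m) = (1+s) * q ^ j := by rw [h1]; ring
      rw [e2, e3]; exact hmod
    have h3 : (1+s) ≡ (1+s) * q ^ m [MOD t] := Nat.ModEq.cancel_left_of_coprime (hcop i) h2
    have hqm1 : 1 ≤ q ^ m := Nat.one_le_pow _ _ (by omega)
    have h4 : t ∣ (1+s) * q ^ m - (1+s) :=
      (Nat.modEq_iff_dvd' (Nat.le_mul_of_pos_right _ (by omega))).1 h3
    have h5 : (1+s) * (q ^ m - 1) + (1+s) = (1+s) * q ^ m := by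
      rw [← Nat.mul_succ]
      congr 1
      omega
    have h4' : t ∣ (1+s) * (q ^ m - 1) := by
      have : (1+s) * (q ^ m - 1) = (1+s) * q ^ m - (1+s) := by omega
      rw [this]; exact h4
    set g := Nat.gcd (1+s) t with hg
    have hgpos : 0 < g := Nat.gcd_pos_of_pos_left t (by omega)
    have hg1 : g ∣ 1+s := Nat.gcd_dvd_left _ _
    have hg2 : g ∣ t := Nat.gcd_dvd_right _ _
    have hge : g ∣ e := by
      have d1 : g ∣ e * (1+s) := Dvd.dvd.mul_left hg1 e
      have d2 : e * (1+s) = e + t := by rw [Nat.mul_add, mul_one, hst]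
      have d3 := Nat.dvd_sub d1 hg2
      rwa [d2, Nat.add_sub_cancel] at d3
    set t' := t / g with ht'
    set s' := (1+s) / g with hs'
    have ht'g : g * t' = t := Nat.mul_div_cancel' hg2
    have hs'g : g * s' = 1+s := Nat.mul_div_cancel' hg1
    have hcop' : Nat.Coprime t' s' := (Nat.coprime_div_gcd_div_gcd hgpos).symm
    obtain ⟨c, hc⟩ := h4'
    have hcc : g * (s' * (q ^ m - 1)) = g * (t' * c) := by
      calc g * (s' * (q ^ m - 1)) = (g * s') * (q ^ m - 1) := by ring
        _ = (1+s) * (q ^ m - 1) := by rw [hs'g]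
        _ = t * c := hc
        _ = (g * t') * c := by rw [ht'g]
        _ = g * (t' * c) := by ring
    have hcc2 : s' * (q ^ m - 1) = t' * c := Nat.eq_of_mul_eq_mul_left hgpos hcc
    have ht'dvd : t' ∣ q ^ m - 1 :=
      Nat.Coprime.dvd_of_dvd_mul_left hcop' ⟨c, hcc2⟩
    have hget : g ≤ e := Nat.le_of_dvd (by omega) hge
    have hst' : s ≤ t' := by
      have d4 : g * t' ≤ e * t' := Nat.mul_le_mul_right t' hget
      have d5 : e * s ≤ e * t' := by omega
      exact Nat.le_of_mul_le_mul_left d5 (by omega)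
    have h6 : q ^ m ≤ X := Nat.pow_le_pow_right (by omega) (by omega)
    have h7 : q ^ 1 ≤ q ^ m := Nat.pow_le_pow_right (by omega) (by omega)
    rw [pow_one] at h7
    have h8 : t' ≤ q ^ m - 1 := Nat.le_of_dvd (by omega) ht'dvd
    omega
  -- part (c)
  have keyc : ∀ i j, i < k → j < k → q ^ i % t ≠ ((1+s) * q ^ j) % t := by
    intro i j hi hj h
    have hqk1mod : q ^ k ≡ 1 [MOD t] :=
      ((Nat.modEq_iff_dvd' (by omega)).2 ht_dvd).symm
    have hm : ∃ m, m < k ∧ q ^ m ≡ (1+s) [MOD t] := by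
      rcases le_or_gt j i with hji | hij
      · refine ⟨i - j, by omega, ?_⟩
        have h1 : q ^ i = q ^ j * q ^ (i - j) := by rw [← pow_add]; congr 1; omega
        have h2 : q ^ j * q ^ (i - j) ≡ q ^ j * (1+s) [MOD t] := by
          have e3 : q ^ j * (1+s) = (1+s) * q ^ j := by ring
          rw [← h1, e3]; exact h
        exact Nat.ModEq.cancel_left_of_coprime (hcop j) h2
      · set m' := j - i with hm'
        refine ⟨k - m', by omega, ?_⟩
        have h1 : (1+s) * q ^ j = q ^ i * ((1+s) * q ^ m') := by
          rw [show j = i + m' by omega, pow_add]; ring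
        have h2 : q ^ i * 1 ≡ q ^ i * ((1+s) * q ^ m') [MOD t] := by
          rw [mul_one, ← h1]; exact h
        have h3 : 1 ≡ (1+s) * q ^ m' [MOD t] := Nat.ModEq.cancel_left_of_coprime (hcop i) h2
        have h4 : q ^ (k - m') * 1 ≡ q ^ (k - m') * ((1+s) * q ^ m') [MOD t] :=
          Nat.ModEq.mul_left _ h3
        have h5 : q ^ (k - m') * ((1+s) * q ^ m') = (1+s) * q ^ k := by
          have e5 : q ^ (k - m') * q ^ m' = q ^ k := by rw [← pow_add]; congr 1; omega
          calc q ^ (k - m') * ((1+s) * q ^ m') = (1+s) * (q ^ (k - m') * q ^ m') := by ring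
            _ = (1+s) * q ^ k := by rw [e5]
        rw [mul_one, h5] at h4
        calc q ^ (k - m') ≡ (1+s) * q ^ k [MOD t] := h4
          _ ≡ (1+s) * 1 [MOD t] := Nat.ModEq.mul_left _ hqk1mod
          _ = 1 + s := by ring
    obtain ⟨m, hmk, hmod⟩ := hm
    have hqmX : q ^ m ≤ X := Nat.pow_le_pow_right (by omega) (by omega)
    have hqm1 : 1 ≤ q ^ m := Nat.one_le_pow _ _ (by omega)
    have hq_lt : q ^ m < t := by omega
    have h2s : 2 * s ≤ e * s := Nat.mul_le_mul_right s he
    have hs_le : 1 + s ≤ t := by omega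
    rcases Nat.eq_or_lt_of_le hs_le with heq | hlt
    · have h0 : q ^ m % t = 0 := by
        rw [hmod, heq, Nat.mod_self]
      have := Nat.le_of_dvd (by omega) (Nat.dvd_of_mod_eq_zero h0)
      omega
    · have heq2 : q ^ m = 1 + s := by
        have h' : q ^ m % t = (1 + s) % t := hmod
        rwa [Nat.mod_eq_of_lt hq_lt, Nat.mod_eq_of_lt hlt] at h'
      rcases Nat.eq_zero_or_pos m with hm0 | hm1
      · rw [hm0, pow_zero] at heq2; omega
      set A := q ^ m with hA
      have c6 : (d * e) * A = (d * e) * s + d * e := by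
        rw [show A = s + 1 by omega, Nat.mul_succ]
      have c7 : (d * e) * A ≤ (q - 1) * A := Nat.mul_le_mul_right A hde_le
      have c8 : (q - 1) * A ≤ (q - 1) * X := Nat.mul_le_mul_left _ hqmX
      have hde2 : 2 ≤ d * e := by
        calc 2 ≤ e := he
        _ = 1 * e := (one_mul e).symm
        _ ≤ d * e := Nat.mul_le_mul_right e hd
      omega
  exact ⟨fun i j hi hj h => (le_total i j).elim (fun hle => keya i j hi hj hle h)
      (fun hle => (keya j i hj hi hle h.symm).symm),
    fun i j hi hj h => (le_total i j).elim (fun hle => keyb i j hi hj hle h)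
      (fun hle => (keyb j i hj hi hle h.symm).symm),
    keyc⟩


open Polynomial

lemma key_vanish (F : Type) [Field F] (q k t s : ℕ)
    (hk : 1 ≤ k) (ht : 0 < t)
    (g : Fˣ) (hg : orderOf g = t)
    (ha : ∀ i j, i < k → j < k → q ^ i % t = q ^ j % t → i = j)
    (hb : ∀ i j, i < k → j < k → ((1+s) * q ^ i) % t = ((1+s) * q ^ j) % t → i = j)
    (hab : ∀ i j, i < k → j < k → q ^ i % t ≠ ((1+s) * q ^ j) % t)
    (u v : F)
    (h : ∀ i : ℕ, ∑ j ∈ Finset.range k,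
        (u ^ q ^ j * ((g : F) ^ i) ^ (q ^ j) + v ^ q ^ j * ((g : F) ^ i) ^ ((1+s) * q ^ j)) = 0) :
    u = 0 ∧ v = 0 := by
  classical
  set P : Polynomial F := ∑ j ∈ Finset.range k,
      (Polynomial.C (u ^ q ^ j) * Polynomial.X ^ (q ^ j % t)
       + Polynomial.C (v ^ q ^ j) * Polynomial.X ^ ((1+s) * q ^ j % t)) with hP
  have hgt : (g : F) ^ t = 1 := by
    have h1 : g ^ t = 1 := by rw [← hg]; exact pow_orderOf_eq_one g
    calc (g : F) ^ t = ((g ^ t : Fˣ) : F) := by rw [Units.val_pow_eq_pow_val]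
      _ = 1 := by rw [h1, Units.val_one]
  have hxt : ∀ i : ℕ, ((g : F) ^ i) ^ t = 1 := by
    intro i
    rw [← pow_mul, mul_comm, pow_mul, hgt, one_pow]
  have hmodpow : ∀ (x : F), x ^ t = 1 → ∀ a : ℕ, x ^ (a % t) = x ^ a := by
    intro x hx a
    conv_rhs => rw [← Nat.div_add_mod a t]
    rw [pow_add, pow_mul, hx, one_pow, one_mul]
  have heval : ∀ i : ℕ, P.eval ((g : F) ^ i) = 0 := by
    intro i
    rw [hP]
    simp only [Polynomial.eval_finset_sum, Polynomial.eval_add, Polynomial.eval_mul,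
      Polynomial.eval_C, Polynomial.eval_pow, Polynomial.eval_X]
    rw [← h i]
    exact Finset.sum_congr rfl fun j _ => by
      rw [hmodpow _ (hxt i), hmodpow _ (hxt i)]
  have hPz : P = 0 := by
    apply Polynomial.eq_zero_of_natDegree_lt_card_of_eval_eq_zero' P
      ((Finset.range t).image (fun i => (g : F) ^ i))
    · intro x hx
      obtain ⟨i, _, rfl⟩ := Finset.mem_image.mp hx
      exact heval i
    · have hinj : Set.InjOn (fun i => (g : F) ^ i) (Finset.range t) := by
        intro i hi j hj hij
        have h2 : g ^ i = g ^ j := by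
          apply Units.ext
          simpa [Units.val_pow_eq_pow_val] using hij
        exact pow_injOn_Iio_orderOf
          (Set.mem_Iio.2 (hg ▸ Finset.mem_range.1 (by simpa using hi)))
          (Set.mem_Iio.2 (hg ▸ Finset.mem_range.1 (by simpa using hj))) h2
      rw [Finset.card_image_of_injOn hinj, Finset.card_range]
      refine lt_of_le_of_lt (Polynomial.natDegree_sum_le_of_forall_le _ _ ?_)
        (show t - 1 < t by omega)
      intro j _
      apply le_trans (Polynomial.natDegree_add_le _ _)
      apply max_le
      · exact le_trans (Polynomial.natDegree_C_mul_X_pow_le _ _) (by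
          have := Nat.mod_lt (q ^ j) ht; omega)
      · exact le_trans (Polynomial.natDegree_C_mul_X_pow_le _ _) (by
          have := Nat.mod_lt ((1+s) * q ^ j) ht; omega)
  have coeffP : ∀ m : ℕ, P.coeff m =
      ∑ j ∈ Finset.range k, ((if m = q ^ j % t then u ^ q ^ j else 0)
        + (if m = (1+s) * q ^ j % t then v ^ q ^ j else 0)) := by
    intro m
    rw [hP, Polynomial.finset_sum_coeff]
    refine Finset.sum_congr rfl fun j _ => ?_
    rw [Polynomial.coeff_add, Polynomial.coeff_C_mul, Polynomial.coeff_C_mul,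
      Polynomial.coeff_X_pow, Polynomial.coeff_X_pow]
    by_cases h1 : m = q ^ j % t <;> by_cases h2 : m = (1+s) * q ^ j % t <;>
      simp [h1, h2]
  have hu : u = 0 := by
    have hc : P.coeff (q ^ 0 % t) = 0 := by rw [hPz, Polynomial.coeff_zero]
    rw [coeffP] at hc
    rw [Finset.sum_eq_single 0 (fun j hj hj0 => by
        rw [if_neg (fun hh => hj0 (ha 0 j hk (Finset.mem_range.1 hj) hh).symm),
          if_neg (hab 0 j hk (Finset.mem_range.1 hj)), add_zero])
      (fun h0 => absurd (Finset.mem_range.2 hk) h0)] at hc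
    rw [if_pos rfl, if_neg (hab 0 0 hk hk), add_zero, pow_zero, pow_one] at hc
    exact hc
  have hv : v = 0 := by
    have hc : P.coeff ((1+s) * q ^ 0 % t) = 0 := by rw [hPz, Polynomial.coeff_zero]
    rw [coeffP] at hc
    rw [Finset.sum_eq_single 0 (fun j hj hj0 => by
        rw [if_neg (Ne.symm (hab j 0 (Finset.mem_range.1 hj) hk)),
          if_neg (fun hh => hj0 (hb 0 j hk (Finset.mem_range.1 hj) hh).symm), add_zero])
      (fun h0 => absurd (Finset.mem_range.2 hk) h0)] at hc
    rw [if_pos rfl, if_neg (Ne.symm (hab 0 0 hk hk)), zero_add, pow_zero, pow_one] at hc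
    exact hc
  exact ⟨hu, hv⟩

/-- The `𝔽_q`-linear map `(u,v) ↦ c_{u,v}` is injective; consequently the code
`C` has exactly `q^(2k)` codewords, i.e. `C` is an `[n, 2k]` linear code. -/
theorem code_C_dimension
    (q n k d e D : ℕ)
    (Fq Fqk : Type) [Field Fq] [Field Fqk] [Fintype Fq] [Fintype Fqk]
    [Algebra Fq Fqk]
    (hq : Fintype.card Fq = q)
    (hqk : Fintype.card Fqk = q ^ k)
    (hn : 3 ≤ n) (hnq : Nat.Coprime n q)
    (hk : k = orderOf (q : ZMod n))
    (hd : 0 < d) (he : 1 < e)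
    (hde : d * e ∣ q - 1)
    (hD : D = (q ^ k - 1) / e)
    (hdn : q ^ k - 1 ∣ d * n)
    (γ : Fqkˣ) (hγ : ∀ x : Fqkˣ, x ∈ Subgroup.zpowers γ) :
    Function.Injective (fun uv : Fqk × Fqk => fun i : Fin n =>
      Algebra.trace Fq Fqk
        (uv.1 * ((γ⁻¹ : Fqkˣ) : Fqk) ^ (d * (i : ℕ)) +
         uv.2 * ((γ⁻¹ : Fqkˣ) : Fqk) ^ ((d + D) * (i : ℕ)))) ∧
    Nat.card {c : Fin n → Fq | ∃ u v : Fqk, c = fun i : Fin n =>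
      Algebra.trace Fq Fqk
        (u * ((γ⁻¹ : Fqkˣ) : Fqk) ^ (d * (i : ℕ)) +
         v * ((γ⁻¹ : Fqkˣ) : Fqk) ^ ((d + D) * (i : ℕ)))} = q ^ (2 * k) := by
  classical
  have hq2 : 2 ≤ q := hq ▸ Fintype.one_lt_card
  have hk1 : 1 ≤ k := by
    by_contra hcon
    have hk0 : k = 0 := by omega
    rw [hk0, pow_zero] at hqk
    have := Fintype.one_lt_card (α := Fqk)
    omega
  have hqk2 : 2 ≤ q ^ k := hqk ▸ Fintype.one_lt_card
  set M := q ^ k - 1 with hM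
  have hMpos : 0 < M := by omega
  have horder : orderOf γ = M := by
    rw [orderOf_eq_card_of_forall_mem_zpowers hγ, Nat.card_eq_fintype_card,
      Fintype.card_units, hqk]
  have hq1M : q - 1 ∣ M := by
    have := Nat.sub_dvd_pow_sub_pow q 1 k
    rwa [one_pow] at this
  have hdeM : d * e ∣ M := hde.trans hq1M
  have hdM : d ∣ M := (dvd_mul_right d e).trans hdeM
  have heM : e ∣ M := (dvd_mul_left e d).trans hdeM
  have he0 : 0 < e := by omega
  set t := M / d with ht
  have hdt : d * t = M := Nat.mul_div_cancel' hdM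
  set s := M / (d * e) with hs
  have hdes : (d * e) * s = M := Nat.mul_div_cancel' hdeM
  have hDM : e * D = M := by rw [hD]; exact Nat.mul_div_cancel' heM
  have hDds : D = d * s := by
    have h1 : e * (d * s) = M := by rw [← hdes]; ring
    have h2 : e * D = e * (d * s) := by rw [hDM, h1]
    exact Nat.eq_of_mul_eq_mul_left he0 h2
  have hst : e * s = t := by
    have h1 : d * (e * s) = d * t := by rw [hdt, ← hdes]; ring
    exact Nat.eq_of_mul_eq_mul_left hd h1
  have htpos : 0 < t := by
    rcases Nat.eq_zero_or_pos t with h0 | h0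
    · rw [h0, Nat.mul_zero] at hdt; omega
    · exact h0
  have htn : t ∣ n := by
    have h1 : d * t ∣ d * n := by rw [hdt]; exact hdn
    exact (mul_dvd_mul_iff_left (by omega : d ≠ 0)).1 h1
  have htlen : t ≤ n := Nat.le_of_dvd (by omega) htn
  set G : Fqkˣ := γ⁻¹ ^ d with hG
  have hordG : orderOf G = t := by
    rw [hG, orderOf_pow' _ (by omega : d ≠ 0), orderOf_inv, horder,
      Nat.gcd_eq_right hdM]
  obtain ⟨HA, HB, HAB⟩ := exponents_distinct q k d e s t hq2 hk1 hd he hde hdt hst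
  -- characteristic facts
  obtain ⟨p, hp⟩ := CharP.exists Fq
  haveI := hp
  obtain ⟨r, hpprime, hcard⟩ := FiniteField.card Fq p
  haveI : Fact p.Prime := ⟨hpprime⟩
  haveI : CharP Fqk p := charP_of_injective_algebraMap (algebraMap Fq Fqk).injective p
  have hqpr : q = p ^ (r : ℕ) := by rw [← hq, hcard]
  have hmapadd : ∀ (j : ℕ) (x y : Fqk), (x + y) ^ q ^ j = x ^ q ^ j + y ^ q ^ j := by
    intro j x y
    rw [hqpr, ← pow_mul]
    exact add_pow_char_pow (R := Fqk) (p := p) x y (↑r * j)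
  -- kernel property
  have hker : ∀ u v : Fqk, (∀ i : Fin n,
      Algebra.trace Fq Fqk (u * ((γ⁻¹ : Fqkˣ) : Fqk) ^ (d * (i : ℕ)) +
        v * ((γ⁻¹ : Fqkˣ) : Fqk) ^ ((d + D) * (i : ℕ))) = 0) → u = 0 ∧ v = 0 := by
    intro u v hvan
    apply key_vanish Fqk q k t s hk1 htpos G hordG HA HB HAB u v
    have main : ∀ i0 : ℕ, i0 < t → ∑ j ∈ Finset.range k,
        (u ^ q ^ j * ((G : Fqk) ^ i0) ^ (q ^ j)
          + v ^ q ^ j * ((G : Fqk) ^ i0) ^ ((1+s) * q ^ j)) = 0 := by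
      intro i0 hi0
      set x : Fqk := (G : Fqk) ^ i0 with hx
      have hc1 : ((γ⁻¹ : Fqkˣ) : Fqk) ^ (d * i0) = x := by
        rw [hx, hG, pow_mul]
        rw [Units.val_pow_eq_pow_val]
      have hc2 : ((γ⁻¹ : Fqkˣ) : Fqk) ^ ((d + D) * i0) = x ^ (1 + s) := by
        have harith : (d + D) * i0 = (d * i0) * (1 + s) := by rw [hDds]; ring
        rw [harith, pow_mul, hc1]
      have hTr0 : Algebra.trace Fq Fqk (u * x + v * x ^ (1 + s)) = 0 := by
        have h2 : Algebra.trace Fq Fqk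
            (u * ((γ⁻¹ : Fqkˣ) : Fqk) ^ (d * i0) +
             v * ((γ⁻¹ : Fqkˣ) : Fqk) ^ ((d + D) * i0)) = 0 :=
          hvan ⟨i0, lt_of_lt_of_le hi0 htlen⟩
        rwa [hc1, hc2] at h2
      have h0 : algebraMap Fq Fqk (Algebra.trace Fq Fqk (u * x + v * x ^ (1 + s))) = 0 := by
        rw [hTr0, map_zero]
      rw [trace_eq_sum_frobenius q k Fq Fqk hq hqk] at h0
      rw [← h0]
      refine Finset.sum_congr rfl fun j _ => ?_
      rw [hmapadd j, mul_pow, mul_pow, pow_mul x (1 + s) (q ^ j)]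
    intro i
    have hGi : (G : Fqk) ^ i = (G : Fqk) ^ (i % t) := by
      have h1 : G ^ (i % t) = G ^ i := by rw [← hordG]; exact pow_mod_orderOf G i
      rw [← Units.val_pow_eq_pow_val, ← Units.val_pow_eq_pow_val, h1]
    rw [hGi]
    exact main (i % t) (Nat.mod_lt i htpos)
  have hinj : Function.Injective (fun uv : Fqk × Fqk => fun i : Fin n =>
      Algebra.trace Fq Fqk
        (uv.1 * ((γ⁻¹ : Fqkˣ) : Fqk) ^ (d * (i : ℕ)) +
         uv.2 * ((γ⁻¹ : Fqkˣ) : Fqk) ^ ((d + D) * (i : ℕ)))) := by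
    intro a b hab2
    have hfun : ∀ i : Fin n,
        Algebra.trace Fq Fqk (a.1 * ((γ⁻¹ : Fqkˣ) : Fqk) ^ (d * (i : ℕ)) +
          a.2 * ((γ⁻¹ : Fqkˣ) : Fqk) ^ ((d + D) * (i : ℕ)))
        = Algebra.trace Fq Fqk (b.1 * ((γ⁻¹ : Fqkˣ) : Fqk) ^ (d * (i : ℕ)) +
          b.2 * ((γ⁻¹ : Fqkˣ) : Fqk) ^ ((d + D) * (i : ℕ))) := fun i => congrFun hab2 i
    have hz := hker (a.1 - b.1) (a.2 - b.2) (by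
      intro i
      have hi := hfun i
      have hexp : (a.1 - b.1) * ((γ⁻¹ : Fqkˣ) : Fqk) ^ (d * (i : ℕ)) +
          (a.2 - b.2) * ((γ⁻¹ : Fqkˣ) : Fqk) ^ ((d + D) * (i : ℕ))
          = (a.1 * ((γ⁻¹ : Fqkˣ) : Fqk) ^ (d * (i : ℕ)) +
              a.2 * ((γ⁻¹ : Fqkˣ) : Fqk) ^ ((d + D) * (i : ℕ)))
            - (b.1 * ((γ⁻¹ : Fqkˣ) : Fqk) ^ (d * (i : ℕ)) +
              b.2 * ((γ⁻¹ : Fqkˣ) : Fqk) ^ ((d + D) * (i : ℕ))) := by ring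
      rw [hexp, map_sub, hi, sub_self])
    have e1 : a.1 = b.1 := sub_eq_zero.1 hz.1
    have e2 : a.2 = b.2 := sub_eq_zero.1 hz.2
    exact Prod.ext e1 e2
  refine ⟨hinj, ?_⟩
  have hset : {c : Fin n → Fq | ∃ u v : Fqk, c = fun i : Fin n =>
      Algebra.trace Fq Fqk
        (u * ((γ⁻¹ : Fqkˣ) : Fqk) ^ (d * (i : ℕ)) +
         v * ((γ⁻¹ : Fqkˣ) : Fqk) ^ ((d + D) * (i : ℕ)))}
      = Set.range (fun uv : Fqk × Fqk => fun i : Fin n =>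
      Algebra.trace Fq Fqk
        (uv.1 * ((γ⁻¹ : Fqkˣ) : Fqk) ^ (d * (i : ℕ)) +
         uv.2 * ((γ⁻¹ : Fqkˣ) : Fqk) ^ ((d + D) * (i : ℕ)))) := by
    ext c
    constructor
    · rintro ⟨u, v, rfl⟩
      exact ⟨(u, v), rfl⟩
    · rintro ⟨⟨u, v⟩, rfl⟩
      exact ⟨u, v, rfl⟩
  rw [hset, Nat.card_range_of_injective hinj, Nat.card_prod,
    Nat.card_eq_fintype_card, hqk, two_mul, pow_add]
end

section
/- For a positive integer $m$, the following are equivalent: (a) $\gamma^{Dm} = 1$ and $\gamma^{dm} \in \mathbb{F}_q$ (i.e. there is $c \in \mathbb{F}_q$ with $x^m - c$ having both $\gamma^d$ and $\gamma^{d+D}$ as roots); (b) $m$ is divisible by $\dfrac{(q^k-1)e}{(q-1)f}$, where $f = \gcd\big((q^k-1)/(q-1),\, de\big)$. -/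
private lemma arith_aux (T d e m : ℕ) (hT : 0 < T) (hd : 0 < d) (he : 0 < e) :
    (e ∣ m ∧ T ∣ d * m) ↔ T * e / Nat.gcd T (d * e) ∣ m := by
  set g := Nat.gcd T d with hg
  have hg0 : 0 < g := Nat.gcd_pos_of_pos_left _ hT
  have hTg : g ∣ T := Nat.gcd_dvd_left _ _
  have hdg : g ∣ d := Nat.gcd_dvd_right _ _
  set T' := T / g with hT'
  set d' := d / g with hd'
  have hcop : Nat.Coprime T' d' := Nat.coprime_div_gcd_div_gcd hg0
  have hTeq : T = g * T' := (Nat.mul_div_cancel' hTg).symm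
  have hdeq : d = g * d' := (Nat.mul_div_cancel' hdg).symm
  have key1 : (T ∣ d * m) ↔ T' ∣ m := by
    rw [hTeq, hdeq, mul_assoc, mul_dvd_mul_iff_left (by omega : g ≠ 0)]
    exact ⟨fun h => hcop.dvd_of_dvd_mul_left h, fun h => h.mul_left d'⟩
  have key2 : Nat.gcd T (d * e) = g * Nat.gcd T' e := by
    rw [hTeq, hdeq, mul_assoc, Nat.gcd_mul_left]
    congr 1
    exact hcop.symm.gcd_mul_left_cancel_right e
  have key3 : T * e / Nat.gcd T (d * e) = Nat.lcm T' e := by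
    rw [key2, show T * e = g * (T' * e) by rw [hTeq, mul_assoc],
      Nat.mul_div_mul_left _ _ hg0, Nat.lcm]
  rw [key1, key3, Nat.lcm_dvd_iff, and_comm]

/-- For a positive integer `m`, the following are equivalent:
(a) `γ^(Dm) = 1` and `γ^(dm) ∈ 𝔽_q`;
(b) `m` is divisible by `(q^k-1)e / ((q-1)f)`, where `f = gcd((q^k-1)/(q-1), de)`. -/
theorem binomial_vanishing_iff
    (q k d e D : ℕ)
    (hq : IsPrimePow q) (hk : 1 ≤ k)
    (Fq Fqk : Type) [Field Fq] [Field Fqk] [Fintype Fq] [Fintype Fqk]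
    [Algebra Fq Fqk]
    (hcard : Fintype.card Fq = q)
    (hqk : Fintype.card Fqk = q ^ k)
    (γ : Fqkˣ) (hγ : ∀ x : Fqkˣ, x ∈ Subgroup.zpowers γ)
    (hd : 0 < d) (he : 1 < e)
    (hde : d * e ∣ q - 1)
    (hD : D = (q ^ k - 1) / e) :
    ∀ m : ℕ, 0 < m →
      (((γ : Fqk)) ^ (D * m) = 1 ∧
        ∃ c : Fq, ((γ : Fqk)) ^ (d * m) = algebraMap Fq Fqk c)
      ↔ ((q ^ k - 1) * e) / ((q - 1) * Nat.gcd ((q ^ k - 1) / (q - 1)) (d * e)) ∣ m := by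
  intro m
  rcases Nat.eq_zero_or_pos m with rfl | hm
  · exact iff_of_true (fun h => absurd h (lt_irrefl 0)) (dvd_zero _)
  rw [imp_iff_right hm]
  classical
  have hq2 : 2 ≤ q := hq.two_le
  have hqk2 : 2 ≤ q ^ k := le_trans hq2 (Nat.le_self_pow (by omega) q)
  set N := q ^ k - 1 with hN
  set Q := q - 1 with hQ
  have hQ0 : 0 < Q := by omega
  have hN0 : 0 < N := by omega
  have hQN : Q ∣ N := by
    simpa only [one_pow] using Nat.sub_dvd_pow_sub_pow q 1 k
  have heQ : e ∣ Q := (dvd_mul_left e d).trans hde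
  have heN : e ∣ N := heQ.trans hQN
  set T := N / Q with hT
  have hT0 : 0 < T := Nat.div_pos (Nat.le_of_dvd hN0 hQN) hQ0
  have hNQT : N = Q * T := (Nat.mul_div_cancel' hQN).symm
  have horder : orderOf γ = N := by
    rw [orderOf_eq_card_of_forall_mem_zpowers hγ, Nat.card_eq_fintype_card,
      Fintype.card_units, hqk]
  have hpow : ∀ n : ℕ, (((γ : Fqk)) ^ n = 1) ↔ N ∣ n := fun n => by
    rw [← Units.val_pow_eq_pow_val, Units.val_eq_one, ← horder,
      orderOf_dvd_iff_pow_eq_one]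
  have hDe : N = D * e := by rw [hD]; exact (Nat.div_mul_cancel heN).symm
  have hD0 : 0 < D := by rw [hD]; exact Nat.div_pos (Nat.le_of_dvd hN0 heN) (by omega)
  have c1 : (((γ : Fqk)) ^ (D * m) = 1) ↔ e ∣ m := by
    rw [hpow, hDe, Nat.mul_dvd_mul_iff_left hD0]
  have hmem : ∀ x : Fqkˣ, (∃ c : Fq, (x : Fqk) = algebraMap Fq Fqk c) ↔
      (x : Fqk) ^ Q = 1 := by
    intro x
    constructor
    · rintro ⟨c, hc⟩
      have hc0 : c ≠ 0 := by
        rintro rfl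
        rw [map_zero] at hc
        exact x.ne_zero hc
      have hcq : c ^ Q = 1 := by
        rw [hQ, ← hcard]; exact FiniteField.pow_card_sub_one_eq_one c hc0
      rw [hc, ← map_pow, hcq, map_one]
    · intro h
      have hxq : (x : Fqk) ^ q = x := by
        have hq1 : q = Q + 1 := by omega
        rw [hq1, pow_succ, h, one_mul]
      set P : Polynomial Fqk := Polynomial.X ^ q - Polynomial.X with hP
      have hPne : P ≠ 0 := FiniteField.X_pow_card_sub_X_ne_zero Fqk (by omega)
      have hdeg : P.natDegree = q := FiniteField.X_pow_card_sub_X_natDegree_eq Fqk (by omega)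
      have hroot : (x : Fqk) ∈ P.roots := by
        rw [Polynomial.mem_roots hPne]
        simp [hP, Polynomial.IsRoot, hxq, sub_eq_zero]
      set S : Finset Fqk := Finset.univ.image (algebraMap Fq Fqk) with hS
      have hScard : S.card = q := by
        rw [hS, Finset.card_image_of_injective _ (algebraMap Fq Fqk).injective,
          Finset.card_univ, hcard]
      have hsub : S ⊆ P.roots.toFinset := by
        intro y hy
        rw [hS, Finset.mem_image] at hy
        obtain ⟨c, -, rfl⟩ := hy
        have hcp : (algebraMap Fq Fqk c) ^ q = algebraMap Fq Fqk c := by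
          rw [← map_pow]
          congr 1
          rw [← hcard]
          exact FiniteField.pow_card c
        rw [Multiset.mem_toFinset, Polynomial.mem_roots hPne]
        simp [hP, Polynomial.IsRoot, hcp, sub_eq_zero]
      have hcardle : P.roots.toFinset.card ≤ q := by
        calc P.roots.toFinset.card ≤ Multiset.card P.roots := P.roots.toFinset_card_le
          _ ≤ P.natDegree := P.card_roots'
          _ = q := hdeg
      have hSeq : S = P.roots.toFinset :=
        Finset.eq_of_subset_of_card_le hsub (by rw [hScard]; exact hcardle)
      have hxS : (x : Fqk) ∈ S := by rw [hSeq, Multiset.mem_toFinset]; exact hroot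
      rw [hS, Finset.mem_image] at hxS
      obtain ⟨c, -, hc⟩ := hxS
      exact ⟨c, hc.symm⟩
  have c2 : (∃ c : Fq, ((γ : Fqk)) ^ (d * m) = algebraMap Fq Fqk c) ↔ T ∣ d * m := by
    have h := hmem (γ ^ (d * m))
    rw [Units.val_pow_eq_pow_val] at h
    rw [h, ← pow_mul, hpow, hNQT, mul_comm (d * m) Q, Nat.mul_dvd_mul_iff_left hQ0]
  have hrhs : (N * e) / (Q * Nat.gcd T (d * e)) = T * e / Nat.gcd T (d * e) := by
    rw [hNQT, mul_assoc, Nat.mul_div_mul_left _ _ hQ0]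
  rw [c1, c2, hrhs]
  exact arith_aux T d e m hT0 hd (by omega)
end

section
/- The number of integers $m$ with $1 \le m \le n-1$ for which there exists $c \in \mathbb{F}_q$ with $\gamma^{dm} = c$ and $\gamma^{(d+D)m} = c$ equals $\dfrac{\lambda f (q-1)}{de} - 1$; consequently, the number $B_2$ of codewords of Hamming weight $2$ in the dual code $C^\perp$ equals $\big(\frac{\lambda f (q-1)}{de} - 1\big)(q-1)$. -/
lemma aux_gcd_mul (M d e : ℕ) (hd : 0 < d) :
    Nat.gcd M (d * e) = Nat.gcd M d * Nat.gcd (M / Nat.gcd M d) e := by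
  set g := Nat.gcd M d with hg
  have hgpos : 0 < g := Nat.gcd_pos_of_pos_right _ hd
  obtain ⟨M', hM'⟩ := Nat.gcd_dvd_left M d
  obtain ⟨d', hd'⟩ := Nat.gcd_dvd_right M d
  have hM'eq : M / g = M' := by rw [hM', Nat.mul_div_cancel_left _ hgpos]
  rw [hM'eq]
  apply Nat.dvd_antisymm
  · set G := Nat.gcd M (d * e) with hG
    have hGd : Nat.gcd G d = g := by
      rw [hG, Nat.gcd_assoc, Nat.gcd_comm (d*e) d, Nat.gcd_eq_left (dvd_mul_right d e)]
    have hgG : g ∣ G := by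
      have h := Nat.gcd_dvd_left G d; rw [hGd] at h; exact h
    obtain ⟨G', hG'⟩ := hgG
    have hcopG : Nat.Coprime G' d' := by
      have h2 : g * Nat.gcd G' d' = g := by
        rw [← Nat.gcd_mul_left, ← hG', ← hd', hGd]
      exact Nat.eq_of_mul_eq_mul_left hgpos (h2.trans (mul_one g).symm)
    have hG'e : G' ∣ e := by
      have h3 : G ∣ d * e := Nat.gcd_dvd_right _ _
      rw [hG', hd', mul_assoc] at h3
      exact hcopG.dvd_of_dvd_mul_left ((Nat.mul_dvd_mul_iff_left hgpos).mp h3)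
    have hG'M' : G' ∣ M' := by
      have h4 : G ∣ M := Nat.gcd_dvd_left _ _
      rw [hG', hM'] at h4
      exact (Nat.mul_dvd_mul_iff_left hgpos).mp h4
    rw [hG']
    exact Nat.mul_dvd_mul_left g (Nat.dvd_gcd hG'M' hG'e)
  · apply Nat.dvd_gcd
    · rw [hM']; exact Nat.mul_dvd_mul_left g (Nat.gcd_dvd_left _ _)
    · rw [hd']
      calc g * Nat.gcd M' e ∣ g * e := Nat.mul_dvd_mul_left g (Nat.gcd_dvd_right _ _)
        _ ∣ g * d' * e := by rw [mul_assoc]; exact Nat.mul_dvd_mul_left g (dvd_mul_left e d')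

lemma aux_dvd_iff (M d m : ℕ) (hd : 0 < d) :
    M ∣ d * m ↔ M / Nat.gcd M d ∣ m := by
  have hgpos : 0 < Nat.gcd M d := Nat.gcd_pos_of_pos_right _ hd
  rw [Nat.div_dvd_iff_dvd_mul (Nat.gcd_dvd_left M d) hgpos]
  constructor
  · intro h
    have := Nat.dvd_gcd (dvd_mul_right M m) h
    rwa [Nat.gcd_mul_right] at this
  · intro h
    exact h.trans (Nat.mul_dvd_mul_right (Nat.gcd_dvd_right M d) m)

lemma aux_card_subtype (B : ℕ) : Nat.card {j : ℕ // 1 ≤ j ∧ j ≤ B} = B := by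
  have h : Nat.card (Set.Icc 1 B) = B := by
    rw [Nat.card_eq_fintype_card, Fintype.card_Icc, Nat.card_Icc]; omega
  exact h

lemma aux_fix (Fq Fqk : Type) [Field Fq] [Field Fqk] [Fintype Fq] [Algebra Fq Fqk]
    (q : ℕ) (hq : Fintype.card Fq = q) (x : Fqk) (hx : x ^ q = x) :
    ∃ c : Fq, algebraMap Fq Fqk c = x := by
  classical
  have hq2 : 2 ≤ q := hq ▸ Fintype.one_lt_card
  set p : Polynomial Fqk := Polynomial.X ^ q - Polynomial.X with hp
  have hdeg : p.degree = q := by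
    rw [hp]
    rw [Polynomial.degree_sub_eq_left_of_degree_lt]
    · exact Polynomial.degree_X_pow q
    · rw [Polynomial.degree_X_pow, Polynomial.degree_X]
      exact_mod_cast hq2
  have hp0 : p ≠ 0 := by
    intro h
    rw [h, Polynomial.degree_zero] at hdeg
    exact absurd hdeg.symm (by simp)
  have hnatdeg : p.natDegree = q := Polynomial.natDegree_eq_of_degree_eq_some hdeg
  have hroots_card : p.roots.toFinset.card ≤ q :=
    le_trans (Multiset.toFinset_card_le _) (le_trans (Polynomial.card_roots' p) hnatdeg.le)
  have hφinj : Function.Injective (algebraMap Fq Fqk) := (algebraMap Fq Fqk).injective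
  set img : Finset Fqk := Finset.univ.image (algebraMap Fq Fqk) with himg
  have himgcard : img.card = q := by
    rw [himg, Finset.card_image_of_injective _ hφinj, Finset.card_univ, hq]
  have hsub : img ⊆ p.roots.toFinset := by
    intro y hy
    obtain ⟨c, _, rfl⟩ := Finset.mem_image.mp hy
    rw [Multiset.mem_toFinset, Polynomial.mem_roots hp0]
    have hcq : c ^ q = c := by rw [← hq]; exact FiniteField.pow_card c
    simp only [Polynomial.IsRoot, hp, Polynomial.eval_sub, Polynomial.eval_pow,
      Polynomial.eval_X, ← map_pow, hcq, sub_self]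
  have heq : img = p.roots.toFinset :=
    Finset.eq_of_subset_of_card_le hsub (by rw [himgcard]; exact hroots_card)
  have hxroot : x ∈ p.roots.toFinset := by
    rw [Multiset.mem_toFinset, Polynomial.mem_roots hp0]
    simp only [Polynomial.IsRoot, hp, Polynomial.eval_sub, Polynomial.eval_pow,
      Polynomial.eval_X, hx, sub_self]
  rw [← heq] at hxroot
  obtain ⟨c, _, hc⟩ := Finset.mem_image.mp hxroot
  exact ⟨c, hc⟩

/-- The number of integers `1 ≤ m ≤ n-1` for which some `c ∈ 𝔽_q` satisfies
`γ^(dm) = c` and `γ^((d+D)m) = c` equals `λf(q-1)/(de) - 1`; consequently the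
number `B₂` of weight-2 words of the dual code `C⊥` (binomials `a x^m - b`
vanishing at `γ^d` and `γ^(d+D)`) equals `(λf(q-1)/(de) - 1)(q-1)`. -/
theorem number_of_weight_two_dual_words
    (q n k d e D lam f : ℕ)
    (Fq Fqk : Type) [Field Fq] [Field Fqk] [Fintype Fq] [Fintype Fqk]
    [Algebra Fq Fqk]
    (hq : Fintype.card Fq = q)
    (hqk : Fintype.card Fqk = q ^ k)
    (hn : 3 ≤ n) (hnq : Nat.Coprime n q)
    (hk : k = orderOf (q : ZMod n))
    (hd : 0 < d) (he : 1 < e)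
    (hde : d * e ∣ q - 1)
    (hD : D = (q ^ k - 1) / e)
    (hdn : q ^ k - 1 ∣ d * n)
    (hlam : lam = d * n / (q ^ k - 1))
    (hf : f = Nat.gcd ((q ^ k - 1) / (q - 1)) (d * e))
    (γ : Fqkˣ) (hγ : ∀ x : Fqkˣ, x ∈ Subgroup.zpowers γ) :
    Nat.card {m : ℕ // 1 ≤ m ∧ m ≤ n - 1 ∧ ∃ c : Fq,
        ((γ : Fqk)) ^ (d * m) = algebraMap Fq Fqk c ∧
        ((γ : Fqk)) ^ ((d + D) * m) = algebraMap Fq Fqk c}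
      = lam * f * (q - 1) / (d * e) - 1 ∧
    Nat.card {p : ℕ × Fq // 1 ≤ p.1 ∧ p.1 ≤ n - 1 ∧ p.2 ≠ 0 ∧ ∃ c : Fq,
        ((γ : Fqk)) ^ (d * p.1) = algebraMap Fq Fqk c ∧
        ((γ : Fqk)) ^ ((d + D) * p.1) = algebraMap Fq Fqk c}
      = (lam * f * (q - 1) / (d * e) - 1) * (q - 1) := by
  classical
  have hq2 : 2 ≤ q := hq ▸ Fintype.one_lt_card
  have hqk2 : 2 ≤ q ^ k := hqk ▸ Fintype.one_lt_card
  have hφinj : Function.Injective (algebraMap Fq Fqk) := (algebraMap Fq Fqk).injective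
  set N := q ^ k - 1 with hN
  have hNpos : 0 < N := by omega
  have hq1pos : 0 < q - 1 := by omega
  have hepos : 0 < e := by omega
  have hdepos : 0 < d * e := Nat.mul_pos hd hepos
  have hNcard : Nat.card Fqkˣ = N := by
    rw [Nat.card_units, Nat.card_eq_fintype_card, hqk]
  have hord : orderOf γ = N := (orderOf_eq_card_of_forall_mem_zpowers hγ).trans hNcard
  have hpow1 : ∀ s : ℕ, (γ ^ s = 1 ↔ N ∣ s) := by
    intro s
    rw [← hord]
    exact ⟨fun h => orderOf_dvd_of_pow_eq_one h, fun h => orderOf_dvd_iff_pow_eq_one.mp h⟩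
  have hunit1 : ∀ s : ℕ, γ ^ s = 1 ↔ ((γ : Fqk)) ^ s = 1 := by
    intro s
    constructor
    · intro h
      rw [← Units.val_pow_eq_pow_val, h, Units.val_one]
    · intro h
      apply Units.ext
      rw [Units.val_pow_eq_pow_val, Units.val_one]
      exact h
  have hq1N : q - 1 ∣ N := by simpa using Nat.sub_dvd_pow_sub_pow q 1 k
  have heN : e ∣ N := dvd_trans (dvd_trans (dvd_mul_left e d) hde) hq1N
  have hDe : D * e = N := by rw [hD]; exact Nat.div_mul_cancel heN
  have hDpos : 0 < D := by
    rcases Nat.eq_zero_or_pos D with h | h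
    · rw [h, zero_mul] at hDe; omega
    · exact h
  set M := N / (q - 1) with hMdef
  have hM : M * (q - 1) = N := Nat.div_mul_cancel hq1N
  set M' := M / Nat.gcd M d with hM'def
  set L := Nat.lcm e M' with hLdef
  -- membership characterization
  have hmem : ∀ u : Fqkˣ, ((∃ c : Fq, (u : Fqk) = algebraMap Fq Fqk c) ↔ u ^ (q - 1) = 1) := by
    intro u
    constructor
    · rintro ⟨c, hc⟩
      have hc0 : c ≠ 0 := fun h => Units.ne_zero u (by rw [hc, h, map_zero])
      apply Units.ext
      rw [Units.val_pow_eq_pow_val, Units.val_one, hc, ← map_pow, ← hq,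
        FiniteField.pow_card_sub_one_eq_one c hc0, map_one]
    · intro h1
      have hval : ((u : Fqk)) ^ (q - 1) = 1 := by
        rw [← Units.val_pow_eq_pow_val, h1, Units.val_one]
      have hxq : ((u : Fqk)) ^ q = (u : Fqk) := by
        have hq1 : q - 1 + 1 = q := by omega
        calc ((u : Fqk)) ^ q = ((u : Fqk)) ^ (q - 1 + 1) := by rw [hq1]
          _ = ((u : Fqk)) ^ (q - 1) * (u : Fqk) := pow_succ _ _
          _ = (u : Fqk) := by rw [hval, one_mul]
      obtain ⟨c, hc⟩ := aux_fix Fq Fqk q hq _ hxq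
      exact ⟨c, hc.symm⟩
  -- the key predicate characterization
  have hPiff : ∀ m : ℕ, ((∃ c : Fq,
      ((γ : Fqk)) ^ (d * m) = algebraMap Fq Fqk c ∧
      ((γ : Fqk)) ^ ((d + D) * m) = algebraMap Fq Fqk c) ↔ L ∣ m) := by
    intro m
    rw [hLdef, Nat.lcm_dvd_iff]
    constructor
    · rintro ⟨c, h1, h2⟩
      have hc0 : c ≠ 0 := by
        rintro rfl
        rw [map_zero] at h1
        exact (pow_ne_zero _ (Units.ne_zero γ)) h1
      have hφc : algebraMap Fq Fqk c ≠ 0 := fun h => hc0 (hφinj (by rw [h, map_zero]))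
      have hsplit : ((γ : Fqk)) ^ ((d + D) * m)
          = ((γ : Fqk)) ^ (d * m) * ((γ : Fqk)) ^ (D * m) := by
        rw [← pow_add, ← Nat.add_mul]
      have hD1 : ((γ : Fqk)) ^ (D * m) = 1 := by
        have h3 : algebraMap Fq Fqk c * ((γ : Fqk)) ^ (D * m) = algebraMap Fq Fqk c * 1 := by
          rw [mul_one, ← h1, ← hsplit, h2]
          exact h1.symm
        exact mul_left_cancel₀ hφc h3
      have hNDm : N ∣ D * m := (hpow1 _).mp ((hunit1 _).mpr hD1)
      constructor
      · have h4 : D * e ∣ D * m := by rw [hDe]; exact hNDm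
        exact (Nat.mul_dvd_mul_iff_left hDpos).mp h4
      · have hcq : c ^ (q - 1) = 1 := by
          rw [← hq]; exact FiniteField.pow_card_sub_one_eq_one c hc0
        have hval : ((γ : Fqk)) ^ (d * m * (q - 1)) = 1 := by
          rw [pow_mul, h1, ← map_pow, hcq, map_one]
        have hNu : N ∣ d * m * (q - 1) := (hpow1 _).mp ((hunit1 _).mpr hval)
        have hMdm : M ∣ d * m := by
          have h5 : M * (q - 1) ∣ d * m * (q - 1) := by rw [hM]; exact hNu
          exact (Nat.mul_dvd_mul_iff_right hq1pos).mp h5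
        exact (aux_dvd_iff M d m hd).mp hMdm
    · rintro ⟨hem, hM'm⟩
      have hNDm : N ∣ D * m := by rw [← hDe]; exact Nat.mul_dvd_mul_left D hem
      have hDu : ((γ : Fqk)) ^ (D * m) = 1 := (hunit1 _).mp ((hpow1 _).mpr hNDm)
      have hMdm : M ∣ d * m := (aux_dvd_iff M d m hd).mpr hM'm
      have hNdm : N ∣ d * m * (q - 1) := by
        rw [← hM]; exact Nat.mul_dvd_mul_right hMdm (q - 1)
      have hu : (γ ^ (d * m)) ^ (q - 1) = 1 := by
        rw [← pow_mul]; exact (hpow1 _).mpr hNdm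
      obtain ⟨c, hc⟩ := (hmem (γ ^ (d * m))).mpr hu
      refine ⟨c, ?_, ?_⟩
      · rw [← hc, Units.val_pow_eq_pow_val]
      · rw [Nat.add_mul, pow_add, hDu, mul_one, ← hc, Units.val_pow_eq_pow_val]
  -- arithmetic
  have hlamN : lam * N = d * n := by rw [hlam]; exact Nat.div_mul_cancel hdn
  set t := (q - 1) / (d * e) with htdef
  have hdet : d * e * t = q - 1 := Nat.mul_div_cancel' hde
  have hT : lam * f * (q - 1) / (d * e) = lam * f * t := by
    rw [← hdet, show lam * f * (d * e * t) = d * e * (lam * f * t) by ring,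
      Nat.mul_div_cancel_left _ hdepos]
  have hfge : f = Nat.gcd M d * Nat.gcd M' e := by
    rw [hf]; exact aux_gcd_mul M d e hd
  have hGL : Nat.gcd e M' * L = e * M' := Nat.gcd_mul_lcm e M'
  have hgM : Nat.gcd M d * M' = M := Nat.mul_div_cancel' (Nat.gcd_dvd_left M d)
  have hGpos : 0 < Nat.gcd e M' := Nat.gcd_pos_of_pos_left _ hepos
  set T := lam * f * t with hTdef
  have key : (d * Nat.gcd e M') * n = (d * Nat.gcd e M') * (L * T) := by
    calc (d * Nat.gcd e M') * n = Nat.gcd e M' * (d * n) := by ring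
      _ = Nat.gcd e M' * (lam * (M * (q - 1))) := by rw [← hlamN, ← hM]
      _ = Nat.gcd e M' * (lam * ((Nat.gcd M d * M') * (d * e * t))) := by rw [hgM, hdet]
      _ = d * ((e * M') * (lam * ((Nat.gcd M d * Nat.gcd M' e) * t))) := by
          rw [Nat.gcd_comm M' e]; ring
      _ = d * ((Nat.gcd e M' * L) * (lam * (f * t))) := by rw [hGL, ← hfge]
      _ = (d * Nat.gcd e M') * (L * T) := by rw [hTdef]; ring
  have hn_eq : n = L * T :=
    Nat.eq_of_mul_eq_mul_left (Nat.mul_pos hd hGpos) key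
  have hLpos : 0 < L := by
    rcases Nat.eq_zero_or_pos L with h | h
    · rw [h, zero_mul] at hn_eq; omega
    · exact h
  have hTpos : 0 < T := by
    rcases Nat.eq_zero_or_pos T with h | h
    · rw [h, mul_zero] at hn_eq; omega
    · exact h
  -- the equivalence for the first count
  have e1 : {m : ℕ // 1 ≤ m ∧ m ≤ n - 1 ∧ L ∣ m} ≃ {j : ℕ // 1 ≤ j ∧ j ≤ T - 1} :=
    { toFun := fun m => ⟨m.1 / L, by
        obtain ⟨m, h1, h2, hDvd⟩ := m
        obtain ⟨c, rfl⟩ := hDvd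
        simp only
        rw [Nat.mul_div_cancel_left _ hLpos]
        have hc1 : 1 ≤ c := by
          rcases Nat.eq_zero_or_pos c with h | h
          · rw [h, mul_zero] at h1; omega
          · exact h
        have hlt : c < T := by
          by_contra hcon
          push_neg at hcon
          have h6 := Nat.mul_le_mul_left L hcon
          omega
        omega⟩
      invFun := fun j => ⟨j.1 * L, by
        obtain ⟨j, h1, h2⟩ := j
        simp only
        refine ⟨?_, ?_, dvd_mul_left L j⟩
        · have h7 : 1 * L ≤ j * L := Nat.mul_le_mul_right L h1
          omega
        · have h8 : j * L ≤ (T - 1) * L := Nat.mul_le_mul_right L h2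
          have h9 : (T - 1) * L = n - L := by
            rw [Nat.sub_mul, one_mul, mul_comm, ← hn_eq]
          omega⟩
      left_inv := fun m => Subtype.ext (Nat.div_mul_cancel m.2.2.2)
      right_inv := fun j => Subtype.ext (Nat.mul_div_cancel j.1 hLpos) }
  have hcard1 : Nat.card {m : ℕ // 1 ≤ m ∧ m ≤ n - 1 ∧ ∃ c : Fq,
      ((γ : Fqk)) ^ (d * m) = algebraMap Fq Fqk c ∧
      ((γ : Fqk)) ^ ((d + D) * m) = algebraMap Fq Fqk c} = T - 1 := by
    rw [Nat.card_congr ((Equiv.subtypeEquivRight (fun m => by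
      simp only [hPiff m])).trans e1)]
    exact aux_card_subtype (T - 1)
  have hcardFq : Nat.card {c : Fq // c ≠ 0} = q - 1 := by
    rw [Nat.card_eq_fintype_card, Fintype.card_subtype_compl,
      Fintype.card_subtype_eq (0 : Fq), hq]
  have e2 : {p : ℕ × Fq // 1 ≤ p.1 ∧ p.1 ≤ n - 1 ∧ p.2 ≠ 0 ∧ ∃ c : Fq,
        ((γ : Fqk)) ^ (d * p.1) = algebraMap Fq Fqk c ∧
        ((γ : Fqk)) ^ ((d + D) * p.1) = algebraMap Fq Fqk c} ≃
      ({m : ℕ // 1 ≤ m ∧ m ≤ n - 1 ∧ ∃ c : Fq,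
        ((γ : Fqk)) ^ (d * m) = algebraMap Fq Fqk c ∧
        ((γ : Fqk)) ^ ((d + D) * m) = algebraMap Fq Fqk c} × {c : Fq // c ≠ 0}) :=
    { toFun := fun p => (⟨p.1.1, p.2.1, p.2.2.1, p.2.2.2.2⟩, ⟨p.1.2, p.2.2.2.1⟩)
      invFun := fun x => ⟨(x.1.1, x.2.1), x.1.2.1, x.1.2.2.1, x.2.2, x.1.2.2.2⟩
      left_inv := fun p => rfl
      right_inv := fun x => rfl }
  constructor
  · rw [hT, hcard1]
  · rw [hT, Nat.card_congr e2, Nat.card_prod, hcard1, hcardFq]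
end

section
/- Assume additionally that $de = q-1$, $\lambda = 1$ and $f = 1$. Then the number of integers $r$ with $1 \le r \le n-1$ such that $\gamma^{dr} \in \mathbb{F}_q$ equals $\dfrac{q-1}{d} - 1$; equivalently, the number of codewords of Hamming weight $2$ in the dual code of $C_d$ is $\big(\frac{q-1}{d} - 1\big)(q-1)$. -/
/-- If `x ^ (q-1) = 1` in a finite field extension `Fqk` of `Fq` with `|Fq| = q`,
then `x` is in the image of `Fq`. -/
lemma aux_pow_card_sub_one_mem_range
    {Fq Fqk : Type} [Field Fq] [Field Fqk] [Fintype Fq] [Fintype Fqk]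
    [Algebra Fq Fqk] {q : ℕ} (hq : Fintype.card Fq = q)
    (x : Fqk) (hx : x ^ (q - 1) = 1) : ∃ c : Fq, x = algebraMap Fq Fqk c := by
  classical
  have hq2 : 1 < q := hq ▸ Fintype.one_lt_card
  have hq1 : 0 < q - 1 := by omega
  set φ := algebraMap Fq Fqk with hφ
  have hinj : Function.Injective φ := (algebraMap Fq Fqk).injective
  set S : Finset Fqk := (Polynomial.nthRoots (q - 1) (1 : Fqk)).toFinset with hS
  set T : Finset Fqk := (Finset.univ.erase (0 : Fq)).image φ with hT
  have hTS : T ⊆ S := by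
    intro y hy
    rw [hT, Finset.mem_image] at hy
    obtain ⟨c, hc, rfl⟩ := hy
    have hc0 : c ≠ 0 := (Finset.mem_erase.mp hc).1
    have : c ^ (q - 1) = 1 := by
      rw [← hq]; exact FiniteField.pow_card_sub_one_eq_one c hc0
    rw [hS, Multiset.mem_toFinset, Polynomial.mem_nthRoots hq1, ← map_pow, this, map_one]
  have hcardT : T.card = q - 1 := by
    rw [hT, Finset.card_image_of_injective _ hinj, Finset.card_erase_of_mem (Finset.mem_univ _),
      Finset.card_univ, hq]
  have hcardS : S.card ≤ q - 1 := by
    calc S.card ≤ Multiset.card (Polynomial.nthRoots (q - 1) (1 : Fqk)) :=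
          Multiset.toFinset_card_le _
      _ ≤ q - 1 := Polynomial.card_nthRoots _ _
  have hST : S = T := (Finset.eq_of_subset_of_card_le hTS (hcardT ▸ hcardS)).symm
  have hxS : x ∈ S := by
    rw [hS, Multiset.mem_toFinset, Polynomial.mem_nthRoots hq1]; exact hx
  rw [hST, hT, Finset.mem_image] at hxS
  obtain ⟨c, _, hc⟩ := hxS
  exact ⟨c, hc.symm⟩

/-- Assume `de = q-1`, `λ = 1`, `f = 1`. Then the number of integers `1 ≤ r ≤ n-1`
with `γ^(dr) ∈ 𝔽_q` is `(q-1)/d - 1`; equivalently, the number of weight-2 words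
in the dual code of `C_d` is `((q-1)/d - 1)(q-1)`. -/
theorem number_of_weight_two_dual_words_Cd
    (q n k d e D lam f : ℕ)
    (Fq Fqk : Type) [Field Fq] [Field Fqk] [Fintype Fq] [Fintype Fqk]
    [Algebra Fq Fqk]
    (hq : Fintype.card Fq = q)
    (hqk : Fintype.card Fqk = q ^ k)
    (hn : 3 ≤ n) (hnq : Nat.Coprime n q)
    (hk : k = orderOf (q : ZMod n))
    (hd : 0 < d) (he : 1 < e)
    (hde : d * e ∣ q - 1)
    (hD : D = (q ^ k - 1) / e)
    (hdn : q ^ k - 1 ∣ d * n)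
    (hlam : lam = d * n / (q ^ k - 1))
    (hf : f = Nat.gcd ((q ^ k - 1) / (q - 1)) (d * e))
    (hde' : d * e = q - 1) (hlam1 : lam = 1) (hf1 : f = 1)
    (γ : Fqkˣ) (hγ : ∀ x : Fqkˣ, x ∈ Subgroup.zpowers γ) :
    Nat.card {r : ℕ // 1 ≤ r ∧ r ≤ n - 1 ∧ ∃ c : Fq,
        ((γ : Fqk)) ^ (d * r) = algebraMap Fq Fqk c}
      = (q - 1) / d - 1 ∧
    Nat.card {p : ℕ × Fq // 1 ≤ p.1 ∧ p.1 ≤ n - 1 ∧ p.2 ≠ 0 ∧ ∃ c : Fq,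
        ((γ : Fqk)) ^ (d * p.1) = algebraMap Fq Fqk c}
      = ((q - 1) / d - 1) * (q - 1) := by
  classical
  have hq2 : 1 < q := hq ▸ Fintype.one_lt_card
  -- q^k - 1 > 0
  have hN0 : 0 < q ^ k - 1 := by
    rcases Nat.eq_zero_or_pos (q ^ k - 1) with h | h
    · rw [h, Nat.div_zero] at hlam; omega
    · exact h
  -- d * n = q^k - 1
  have hN : d * n = q ^ k - 1 := by
    have h1 : d * n / (q ^ k - 1) = 1 := by omega
    obtain ⟨t, ht⟩ := hdn
    rw [ht, Nat.mul_div_cancel_left _ hN0] at h1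
    rw [ht, h1, mul_one]
  have hq1dvd : q - 1 ∣ q ^ k - 1 := by
    simpa using Nat.sub_dvd_pow_sub_pow q 1 k
  have hedvd : e ∣ n := by
    have h1 : d * e ∣ d * n := by rw [hde', hN]; exact hq1dvd
    exact (mul_dvd_mul_iff_left hd.ne').mp h1
  set m := n / e with hmdef
  have hnem : n = e * m := (Nat.mul_div_cancel' hedvd).symm
  have hm1 : 0 < m := by
    rcases Nat.eq_zero_or_pos m with h | h
    · rw [h, mul_zero] at hnem; omega
    · exact h
  have hcop : Nat.Coprime m (d * e) := by
    have hquot : (q ^ k - 1) / (q - 1) = m := by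
      rw [← hN, ← hde', Nat.mul_div_mul_left _ _ hd, hmdef]
    rw [hf, hquot] at hf1
    exact hf1
  have hcopd : Nat.Coprime m d := hcop.coprime_dvd_right (dvd_mul_right d e)
  -- order of γ
  have horder : orderOf γ = q ^ k - 1 := by
    have htop : Subgroup.zpowers γ = ⊤ := (Subgroup.eq_top_iff' _).mpr hγ
    rw [← Nat.card_zpowers, htop, Subgroup.card_top, Nat.card_eq_fintype_card,
      Fintype.card_units, hqk]
  have hpow1 : (γ : Fqk) ^ (q ^ k - 1) = 1 := by
    have h := pow_orderOf_eq_one γ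
    rw [horder] at h
    rw [← Units.val_pow_eq_pow_val, h, Units.val_one]
  -- key characterization
  have hkey : ∀ r : ℕ, (∃ c : Fq, ((γ : Fqk)) ^ (d * r) = algebraMap Fq Fqk c) ↔ m ∣ r := by
    intro r
    constructor
    · rintro ⟨c, hc⟩
      have hc0 : c ≠ 0 := by
        rintro rfl
        rw [map_zero] at hc
        exact pow_ne_zero _ (Units.ne_zero γ) hc
      have h1 : ((γ : Fqk)) ^ (d * r * (q - 1)) = 1 := by
        rw [pow_mul, hc, ← map_pow, ← hq, FiniteField.pow_card_sub_one_eq_one c hc0, map_one]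
      have h2 : γ ^ (d * r * (q - 1)) = 1 := by
        ext; push_cast; simpa using h1
      have h3 : (q ^ k - 1) ∣ d * r * (q - 1) := horder ▸ orderOf_dvd_of_pow_eq_one h2
      rw [← hN, ← hde'] at h3
      have h4 : m ∣ r * d := by
        have h5 : (d * e) * (e * m) ∣ (d * e) * (e * (r * d)) := by
          have h7 : d * (e * m) ∣ d * r * (d * e) := by rw [← hnem]; exact h3
          obtain ⟨t, ht⟩ := h7
          refine ⟨t, ?_⟩
          calc (d * e) * (e * (r * d)) = e * (d * r * (d * e)) := by ring
            _ = e * (d * (e * m) * t) := by rw [ht]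
            _ = ((d * e) * (e * m)) * t := by ring
        have h6 : e * m ∣ e * (r * d) :=
          (mul_dvd_mul_iff_left (by positivity : (0:ℕ) < d * e).ne').mp h5
        exact (mul_dvd_mul_iff_left (by omega : e ≠ 0)).mp h6
      exact hcopd.dvd_of_dvd_mul_right h4
    · rintro ⟨j, rfl⟩
      have hdvd : (q ^ k - 1) ∣ d * (m * j) * (q - 1) := by
        rw [← hN, ← hde', hnem]
        exact ⟨j * d, by ring⟩
      obtain ⟨t, ht⟩ := hdvd
      have h1 : ((γ : Fqk) ^ (d * (m * j))) ^ (q - 1) = 1 := by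
        rw [← pow_mul, ht, pow_mul, hpow1, one_pow]
      obtain ⟨c, hc⟩ := aux_pow_card_sub_one_mem_range hq _ h1
      exact ⟨c, hc⟩
  -- count the set of r
  have hcount : Nat.card {r : ℕ // 1 ≤ r ∧ r ≤ n - 1 ∧ ∃ c : Fq,
      ((γ : Fqk)) ^ (d * r) = algebraMap Fq Fqk c} = e - 1 := by
    have hcongr : Nat.card {r : ℕ // 1 ≤ r ∧ r ≤ n - 1 ∧ ∃ c : Fq,
        ((γ : Fqk)) ^ (d * r) = algebraMap Fq Fqk c}
        = Nat.card {r : ℕ // r ∈ (Finset.Icc 1 (e-1)).image (· * m)} := by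
      apply Nat.card_congr
      apply Equiv.subtypeEquivRight
      intro r
      rw [Finset.mem_image]
      constructor
      · rintro ⟨h1, h2, h3⟩
        obtain ⟨j, rfl⟩ := (hkey r).mp h3
        refine ⟨j, Finset.mem_Icc.mpr ⟨?_, ?_⟩, by ring⟩
        · rcases Nat.eq_zero_or_pos j with h | h
          · subst h; simp at h1
          · exact h
        · by_contra hj
          push_neg at hj
          have : e ≤ j := by omega
          have : e * m ≤ m * j := by
            calc e * m ≤ j * m := Nat.mul_le_mul_right m this
              _ = m * j := by ring
          omega
      · rintro ⟨j, hj, rfl⟩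
        rw [Finset.mem_Icc] at hj
        refine ⟨by nlinarith [hj.1, hm1], ?_, (hkey (j * m)).mpr ⟨j, by ring⟩⟩
        have : j * m ≤ (e - 1) * m := Nat.mul_le_mul_right m hj.2
        have h2 : (e - 1) * m = e * m - m := by
          rw [Nat.sub_mul, one_mul]
        omega
    rw [hcongr, Nat.card_eq_finsetCard,
      Finset.card_image_of_injective _ (fun a b h => Nat.eq_of_mul_eq_mul_right hm1 h),
      Nat.card_Icc]
    omega
  have hqd : (q - 1) / d - 1 = e - 1 := by
    rw [← hde', Nat.mul_div_cancel_left e hd]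
  constructor
  · rw [hcount, hqd]
  · have hsplit : Nat.card {p : ℕ × Fq // 1 ≤ p.1 ∧ p.1 ≤ n - 1 ∧ p.2 ≠ 0 ∧ ∃ c : Fq,
        ((γ : Fqk)) ^ (d * p.1) = algebraMap Fq Fqk c}
        = Nat.card ({r : ℕ // 1 ≤ r ∧ r ≤ n - 1 ∧ ∃ c : Fq,
            ((γ : Fqk)) ^ (d * r) = algebraMap Fq Fqk c} × {c : Fq // c ≠ 0}) := by
      apply Nat.card_congr
      exact (Equiv.subtypeEquivRight (fun p => by tauto)).trans
        (Equiv.subtypeProdEquivProd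
          (p := fun r : ℕ => 1 ≤ r ∧ r ≤ n - 1 ∧ ∃ c : Fq,
            ((γ : Fqk)) ^ (d * r) = algebraMap Fq Fqk c)
          (q := fun c : Fq => c ≠ 0))
    rw [hsplit, Nat.card_prod, hcount, hqd]
    congr 1
    rw [← Nat.card_congr (unitsEquivNeZero (G₀ := Fq)), Nat.card_eq_fintype_card,
      Fintype.card_units, hq]
end

section
/- If there is a value $w$ such that every codeword $c_u$ with $u \ne 0$ has Hamming weight $w$ (i.e. the code $C_d$ is a one-weight code), then $w \cdot (q^k - 1) = n (q-1) q^{k-1}$; in particular $w = \mu q^{k-1}$ where $\mu = \lambda(q-1)/d$ divides $q-1$. -/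
open Finset

theorem trace_count (q k : ℕ) (Fq Fqk : Type) [Field Fq] [Field Fqk] [Fintype Fq] [Fintype Fqk]
    [DecidableEq Fq] [Algebra Fq Fqk]
    (hq : Fintype.card Fq = q) (hqk : Fintype.card Fqk = q ^ k) :
    ({v : Fqk | Algebra.trace Fq Fqk v ≠ 0} : Finset Fqk).card = q ^ k - q ^ (k - 1) := by
  classical
  have hq2 : 2 ≤ q := hq ▸ Fintype.one_lt_card

  have hfr : Module.finrank Fq Fqk = k := by
    have := Module.card_eq_pow_finrank (K := Fq) (V := Fqk)
    rw [hq, hqk] at this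
    exact (Nat.pow_right_injective hq2 this.symm)
  have hsurj := Algebra.trace_surjective Fq Fqk
  set T : Fqk →ₗ[Fq] Fq := Algebra.trace Fq Fqk with hT
  have hker : Module.finrank Fq (LinearMap.ker T) = k - 1 := by
    have h1 := LinearMap.finrank_range_add_finrank_ker T
    rw [hfr, LinearMap.range_eq_top.mpr hsurj, finrank_top, Module.finrank_self] at h1
    omega
  have hcardker : Fintype.card (LinearMap.ker T) = q ^ (k - 1) := by
    rw [Module.card_eq_pow_finrank (K := Fq) (V := LinearMap.ker T), hq, hker]
  have h0 : ({v : Fqk | T v = 0} : Finset Fqk).card = q ^ (k - 1) := by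
    rw [show ({v : Fqk | T v = 0} : Finset Fqk) = Finset.univ.filter (fun v => T v = 0) from rfl,
      ← Fintype.card_subtype]
    rw [← hcardker]
    exact Fintype.card_congr (Equiv.subtypeEquivRight (fun v => (LinearMap.mem_ker).symm))
  have := Finset.card_filter_add_card_filter_not
    (s := (Finset.univ : Finset Fqk)) (p := fun v => T v = 0)
  rw [Finset.card_univ, hqk, h0] at this
  have : ({v : Fqk | ¬ T v = 0} : Finset Fqk).card = q ^ k - q ^ (k-1) := by omega
  exact this

/-- If every nonzero codeword `c_u` of `C_d` has the same Hamming weight `w`,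
then `w(q^k - 1) = n(q-1)q^(k-1)`; in particular `w = μ q^(k-1)` where
`μ = λ(q-1)/d` divides `q-1`. -/
theorem one_weight_subcode_weight
    (q n k d e lam w : ℕ)
    (Fq Fqk : Type) [Field Fq] [Field Fqk] [Fintype Fq] [Fintype Fqk]
    [DecidableEq Fq] [Algebra Fq Fqk]
    (hq : Fintype.card Fq = q)
    (hqk : Fintype.card Fqk = q ^ k)
    (hn : 3 ≤ n) (hnq : Nat.Coprime n q)
    (hk : k = orderOf (q : ZMod n))
    (hd : 0 < d) (he : 1 < e)
    (hde : d * e ∣ q - 1)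
    (hdn : q ^ k - 1 ∣ d * n)
    (hlam : lam = d * n / (q ^ k - 1))
    (γ : Fqkˣ) (hγ : ∀ x : Fqkˣ, x ∈ Subgroup.zpowers γ)
    (hw : ∀ u : Fqk, u ≠ 0 →
      hammingNorm (fun i : Fin n =>
        Algebra.trace Fq Fqk (u * ((γ⁻¹ : Fqkˣ) : Fqk) ^ (d * (i : ℕ)))) = w) :
    w * (q ^ k - 1) = n * (q - 1) * q ^ (k - 1) ∧
    ∃ μ : ℕ, μ * d = lam * (q - 1) ∧ w = μ * q ^ (k - 1) ∧ μ ∣ (q - 1) := by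
  classical
  have hq2 : 2 ≤ q := hq ▸ Fintype.one_lt_card
  have hk1 : 1 ≤ k := by
    by_contra h
    have hk0 : k = 0 := by omega
    have := Fintype.one_lt_card (α := Fqk)
    rw [hqk, hk0, pow_zero] at this
    omega
  have hQ1 : 1 ≤ q ^ k := Nat.one_le_pow _ _ (by omega)
  have hQ2 : 2 ≤ q ^ k := hqk ▸ Fintype.one_lt_card
  have hQk1 : 1 ≤ q ^ (k - 1) := Nat.one_le_pow _ _ (by omega)
  -- per column count
  have hcol : ∀ c : Fqk, c ≠ 0 →
      (Finset.univ.filter (fun u : Fqk => Algebra.trace Fq Fqk (u * c) ≠ 0)).card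
        = q ^ k - q ^ (k - 1) := by
    intro c hc
    rw [← trace_count q k Fq Fqk hq hqk]
    apply Finset.card_bij' (fun u _ => u * c) (fun v _ => v * c⁻¹)
    · intro a ha
      simp only [Finset.mem_filter, Finset.mem_univ, true_and] at ha ⊢
      exact ha
    · intro v hv
      simp only [Finset.mem_filter, Finset.mem_univ, true_and] at hv ⊢
      rwa [mul_assoc, inv_mul_cancel₀ hc, mul_one]
    · intro a _
      rw [mul_assoc, mul_inv_cancel₀ hc, mul_one]
    · intro v _
      rw [mul_assoc, inv_mul_cancel₀ hc, mul_one]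
  set β : Fqk := ((γ⁻¹ : Fqkˣ) : Fqk) with hβ
  have hβne : ∀ i : ℕ, β ^ (d * i) ≠ 0 :=
    fun i => pow_ne_zero _ (Units.ne_zero _)
  -- double counting
  have hsum : ∑ u : Fqk, (hammingNorm fun i : Fin n =>
      Algebra.trace Fq Fqk (u * β ^ (d * (i : ℕ)))) = n * ((q ^ k) - q ^ (k - 1)) := by
    have h1 : ∀ u : Fqk, (hammingNorm fun i : Fin n =>
        Algebra.trace Fq Fqk (u * β ^ (d * (i : ℕ))))
        = ∑ i : Fin n, if Algebra.trace Fq Fqk (u * β ^ (d * (i : ℕ))) ≠ 0 then 1 else 0 := by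
      intro u
      rw [hammingNorm, Finset.card_filter]
    simp_rw [h1]
    rw [Finset.sum_comm]
    have h2 : ∀ i : Fin n, (∑ u : Fqk,
        if Algebra.trace Fq Fqk (u * β ^ (d * (i : ℕ))) ≠ 0 then 1 else 0)
        = q ^ k - q ^ (k - 1) := by
      intro i
      rw [← Finset.card_filter]
      exact hcol _ (hβne i)
    simp_rw [h2]
    rw [Finset.sum_const, Finset.card_univ, Fintype.card_fin, smul_eq_mul]
  -- other side
  have hsum2 : ∑ u : Fqk, (hammingNorm fun i : Fin n =>
      Algebra.trace Fq Fqk (u * β ^ (d * (i : ℕ)))) = (q ^ k - 1) * w := by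
    rw [← Finset.add_sum_erase _ _ (Finset.mem_univ (0 : Fqk))]
    have h0 : (hammingNorm fun i : Fin n =>
        Algebra.trace Fq Fqk ((0 : Fqk) * β ^ (d * (i : ℕ)))) = 0 := by
      simp [hammingNorm]
    rw [h0, zero_add]
    rw [Finset.sum_congr rfl (fun u hu => hw u (Finset.ne_of_mem_erase hu))]
    rw [Finset.sum_const, Finset.card_erase_of_mem (Finset.mem_univ _),
      Finset.card_univ, hqk, smul_eq_mul]
  have hmain : (q ^ k - 1) * w = n * ((q - 1) * q ^ (k - 1)) := by
    have hsplit : q ^ k - q ^ (k - 1) = (q - 1) * q ^ (k - 1) := by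
      have hqq : q ^ k = q * q ^ (k - 1) := by
        rw [← pow_succ']
        congr 1
        omega
      rw [hqq, Nat.sub_one_mul]
    rw [← hsplit, ← hsum, hsum2]
  constructor
  · rw [mul_comm]
    rw [hmain]
    ring
  -- coprimality
  have hcopq : Nat.Coprime (q ^ k - 1) q := by
    have hdvd : q ∣ q ^ k := dvd_pow_self q (by omega)
    have h1 : Nat.gcd (q ^ k - 1) q ∣ q ^ k - (q ^ k - 1) :=
      Nat.dvd_sub ((Nat.gcd_dvd_right _ _).trans hdvd) (Nat.gcd_dvd_left _ _)
    have h2 : q ^ k - (q ^ k - 1) = 1 := by omega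
    rw [h2] at h1
    exact Nat.eq_one_of_dvd_one h1
  have hcop : Nat.Coprime (q ^ k - 1) (q ^ (k - 1)) := hcopq.pow_right _
  have hdvdnq : (q ^ k - 1) ∣ n * (q - 1) := by
    apply hcop.dvd_of_dvd_mul_right
    exact ⟨w, by rw [hmain]; ring⟩
  obtain ⟨μ, hμ⟩ := hdvdnq
  refine ⟨μ, ?_, ?_, ?_⟩
  · -- μ * d = lam * (q - 1)
    have hlam' : lam * (q ^ k - 1) = d * n := by
      rw [hlam]
      exact Nat.div_mul_cancel hdn
    have : μ * d * (q ^ k - 1) = lam * (q - 1) * (q ^ k - 1) := by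
      calc μ * d * (q ^ k - 1) = d * ((q ^ k - 1) * μ) := by ring
        _ = d * (n * (q - 1)) := by rw [← hμ]
        _ = (d * n) * (q - 1) := by ring
        _ = lam * (q ^ k - 1) * (q - 1) := by rw [hlam']
        _ = lam * (q - 1) * (q ^ k - 1) := by ring
    exact Nat.eq_of_mul_eq_mul_right (by omega) this
  · -- w = μ * q ^ (k-1)
    have : w * (q ^ k - 1) = μ * q ^ (k - 1) * (q ^ k - 1) := by
      calc w * (q ^ k - 1) = (q ^ k - 1) * w := by ring
        _ = n * ((q - 1) * q ^ (k - 1)) := hmain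
        _ = (n * (q - 1)) * q ^ (k - 1) := by ring
        _ = ((q ^ k - 1) * μ) * q ^ (k - 1) := by rw [← hμ]
        _ = μ * q ^ (k - 1) * (q ^ k - 1) := by ring
    exact Nat.eq_of_mul_eq_mul_right (by omega) this
  · -- μ ∣ q - 1
    haveI : NeZero n := ⟨by omega⟩
    have hqk1 : ((q : ZMod n)) ^ k = 1 := by
      rw [hk]; exact pow_orderOf_eq_one _
    have hcast : ((q ^ k - 1 : ℕ) : ZMod n) = 0 := by
      rw [Nat.cast_sub hQ1]
      push_cast
      rw [hqk1]
      ring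
    have hndvd : n ∣ q ^ k - 1 := (ZMod.natCast_eq_zero_iff _ _).mp hcast
    obtain ⟨m, hm⟩ := hndvd
    refine ⟨m, ?_⟩
    have : n * (q - 1) = n * (μ * m) := by
      calc n * (q - 1) = (q ^ k - 1) * μ := hμ
        _ = n * m * μ := by rw [hm]
        _ = n * (μ * m) := by ring
    exact Nat.eq_of_mul_eq_mul_left (by omega) this
end

section
/- If the code $C$ is a two-weight code with distinct nonzero Hamming weights $w_1$ and $w_2$, then $q^{2k-2}$ divides the product $w_1 w_2$. -/
open Finset

/-- If the code `C` is a two-weight code with distinct nonzero Hamming weights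
`w₁` and `w₂`, then `q^(2k-2)` divides `w₁ w₂`. -/
theorem q_pow_divides_weight_product
    (q n k d e D w₁ w₂ : ℕ)
    (Fq Fqk : Type) [Field Fq] [Field Fqk] [Fintype Fq] [Fintype Fqk]
    [DecidableEq Fq] [Algebra Fq Fqk]
    (hq : Fintype.card Fq = q)
    (hqk : Fintype.card Fqk = q ^ k)
    (hn : 3 ≤ n) (hnq : Nat.Coprime n q)
    (hk : k = orderOf (q : ZMod n))
    (hd : 0 < d) (he : 1 < e)
    (hde : d * e ∣ q - 1)
    (hD : D = (q ^ k - 1) / e)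
    (hdn : q ^ k - 1 ∣ d * n)
    (γ : Fqkˣ) (hγ : ∀ x : Fqkˣ, x ∈ Subgroup.zpowers γ)
    (hne : w₁ ≠ w₂) (hw₁ : w₁ ≠ 0) (hw₂ : w₂ ≠ 0)
    (hC : {w : ℕ | ∃ u v : Fqk, ¬ (u = 0 ∧ v = 0) ∧
      hammingNorm (fun i : Fin n =>
        Algebra.trace Fq Fqk
          (u * ((γ⁻¹ : Fqkˣ) : Fqk) ^ (d * (i : ℕ)) +
           v * ((γ⁻¹ : Fqkˣ) : Fqk) ^ ((d + D) * (i : ℕ)))) = w}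
      = {w₁, w₂}) :
    q ^ (2 * k - 2) ∣ w₁ * w₂ := by
  classical
  set β : Fqk := ((γ⁻¹ : Fqkˣ) : Fqk) with hβ
  have hq2 : 2 ≤ q := by
    rw [← hq]; exact Fintype.one_lt_card
  haveI : FiniteDimensional Fq Fqk := Module.Finite.of_finite
  have hfr : Module.finrank Fq Fqk = k := by
    have h := Module.card_eq_pow_finrank (K := Fq) (V := Fqk)
    rw [hq, hqk] at h
    exact (Nat.pow_right_injective hq2 h.symm)
  have hVfr : Module.finrank Fq (Fqk × Fqk) = 2 * k := by
    rw [Module.finrank_prod, hfr]; ring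
  have hVcard : Fintype.card (Fqk × Fqk) = q ^ (2 * k) := by
    rw [Fintype.card_prod, hqk, ← pow_add]; ring_nf
  -- the coordinate functionals
  let F : Fin n → (Fqk × Fqk) →ₗ[Fq] Fq := fun i =>
    (Algebra.trace Fq Fqk).comp
      (((LinearMap.mulRight Fq (β ^ (d * (i : ℕ)))).comp (LinearMap.fst Fq Fqk Fqk)) +
       ((LinearMap.mulRight Fq (β ^ ((d + D) * (i : ℕ)))).comp (LinearMap.snd Fq Fqk Fqk)))
  have hFapp : ∀ (i : Fin n) (p : Fqk × Fqk),
      F i p = Algebra.trace Fq Fqk (p.1 * β ^ (d * (i : ℕ)) + p.2 * β ^ ((d + D) * (i : ℕ))) := by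
    intro i p
    simp [F, LinearMap.mulRight_apply]
  let wt : Fqk × Fqk → ℕ := fun p => hammingNorm (fun i : Fin n => F i p)
  -- rank lower bounds for kernels
  have hrank1 : ∀ f : (Fqk × Fqk) →ₗ[Fq] Fq,
      2 * k - 2 ≤ Module.finrank Fq (LinearMap.ker f) := by
    intro f
    have h1 := LinearMap.finrank_range_add_finrank_ker f
    rw [hVfr] at h1
    have h2 : Module.finrank Fq (LinearMap.range f) ≤ 1 :=
      le_trans (Submodule.finrank_le _) (le_of_eq (Module.finrank_self Fq))
    omega
  have hrank2 : ∀ f g : (Fqk × Fqk) →ₗ[Fq] Fq,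
      2 * k - 2 ≤ Module.finrank Fq ↥(LinearMap.ker f ⊓ LinearMap.ker g) := by
    intro f g
    have h1 := LinearMap.finrank_range_add_finrank_ker (f.prod g)
    rw [LinearMap.ker_prod, hVfr] at h1
    have h2 : Module.finrank Fq (LinearMap.range (f.prod g)) ≤ 2 := by
      refine le_trans (Submodule.finrank_le _) ?_
      rw [Module.finrank_prod, Module.finrank_self]
    omega
  -- cardinality of a submodule is a power of q with exponent its finrank
  have hsub : ∀ W : Submodule Fq (Fqk × Fqk), 2 * k - 2 ≤ Module.finrank Fq W →
      (q : ℤ) ^ (2 * k - 2) ∣ (Fintype.card W : ℤ) := by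
    intro W hW
    have h := Module.card_eq_pow_finrank (K := Fq) (V := W)
    rw [hq] at h
    rw [h]
    exact_mod_cast Int.natCast_dvd_natCast.mpr (pow_dvd_pow q hW)
  -- counting zeros of one functional
  have hZ1 : ∀ f : (Fqk × Fqk) →ₗ[Fq] Fq,
      (q : ℤ) ^ (2 * k - 2) ∣ ((univ.filter fun p : Fqk × Fqk => f p = 0).card : ℤ) := by
    intro f
    have : (univ.filter fun p : Fqk × Fqk => f p = 0).card
        = Fintype.card (LinearMap.ker f) := by
      rw [← Fintype.card_subtype]
      exact Fintype.card_congr (Equiv.subtypeEquivRight fun p => LinearMap.mem_ker.symm)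
    rw [this]
    exact hsub _ (hrank1 f)
  have hZ2 : ∀ f g : (Fqk × Fqk) →ₗ[Fq] Fq,
      (q : ℤ) ^ (2 * k - 2) ∣
        ((univ.filter fun p : Fqk × Fqk => f p = 0 ∧ g p = 0).card : ℤ) := by
    intro f g
    have : (univ.filter fun p : Fqk × Fqk => f p = 0 ∧ g p = 0).card
        = Fintype.card ↥(LinearMap.ker f ⊓ LinearMap.ker g) := by
      rw [← Fintype.card_subtype]
      refine Fintype.card_congr (Equiv.subtypeEquivRight fun p => ?_)
      simp [Submodule.mem_inf, LinearMap.mem_ker]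
    rw [this]
    exact hsub _ (hrank2 f g)
  have hcardV : (q : ℤ) ^ (2 * k - 2) ∣ (Fintype.card (Fqk × Fqk) : ℤ) := by
    rw [hVcard]
    exact_mod_cast Int.natCast_dvd_natCast.mpr (pow_dvd_pow q (by omega))
  -- weight as a sum of indicators
  have hwt : ∀ p : Fqk × Fqk, (wt p : ℤ)
      = ∑ i : Fin n, (if F i p ≠ 0 then (1 : ℤ) else 0) := by
    intro p
    simp only [wt, hammingNorm]
    rw [Finset.card_filter]
    push_cast
    rfl
  -- divisibility of the first moment
  have hS1 : (q : ℤ) ^ (2 * k - 2) ∣ ∑ p : Fqk × Fqk, (wt p : ℤ) := by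
    have heq : ∑ p : Fqk × Fqk, (wt p : ℤ)
        = ∑ i : Fin n, ((Fintype.card (Fqk × Fqk) : ℤ)
            - ((univ.filter fun p : Fqk × Fqk => F i p = 0).card : ℤ)) := by
      calc ∑ p : Fqk × Fqk, (wt p : ℤ)
          = ∑ i : Fin n, ∑ p : Fqk × Fqk, (if F i p ≠ 0 then (1 : ℤ) else 0) := by
            rw [← Finset.sum_comm]
            exact Finset.sum_congr rfl fun p _ => hwt p
        _ = ∑ i : Fin n, ((Fintype.card (Fqk × Fqk) : ℤ)
            - ((univ.filter fun p : Fqk × Fqk => F i p = 0).card : ℤ)) := by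
            refine Finset.sum_congr rfl fun i _ => ?_
            have h9 : ∀ p : Fqk × Fqk, (if F i p ≠ 0 then (1 : ℤ) else 0)
                = 1 - (if F i p = 0 then (1 : ℤ) else 0) := by
              intro p; by_cases h : F i p = 0 <;> simp [h]
            rw [Finset.sum_congr rfl fun p _ => h9 p, Finset.sum_sub_distrib]
            simp [Finset.sum_boole, Finset.card_univ]
    rw [heq]
    exact Finset.dvd_sum fun i _ => dvd_sub hcardV (hZ1 (F i))
  -- divisibility of the second moment
  have hS2 : (q : ℤ) ^ (2 * k - 2) ∣ ∑ p : Fqk × Fqk, (wt p : ℤ) ^ 2 := by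
    have expand : ∀ p : Fqk × Fqk, (wt p : ℤ) ^ 2
        = ∑ i : Fin n, ∑ j : Fin n,
            (if F i p ≠ 0 then (1 : ℤ) else 0) * (if F j p ≠ 0 then (1 : ℤ) else 0) := by
      intro p
      rw [sq, hwt p, Finset.sum_mul_sum]
    have heq : ∑ p : Fqk × Fqk, (wt p : ℤ) ^ 2
        = ∑ i : Fin n, ∑ j : Fin n,
            ((Fintype.card (Fqk × Fqk) : ℤ)
             - ((univ.filter fun p : Fqk × Fqk => F i p = 0).card : ℤ)
             - ((univ.filter fun p : Fqk × Fqk => F j p = 0).card : ℤ)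
             + ((univ.filter fun p : Fqk × Fqk => F i p = 0 ∧ F j p = 0).card : ℤ)) := by
      calc ∑ p : Fqk × Fqk, (wt p : ℤ) ^ 2
          = ∑ i : Fin n, ∑ j : Fin n, ∑ p : Fqk × Fqk,
            (if F i p ≠ 0 then (1 : ℤ) else 0) * (if F j p ≠ 0 then (1 : ℤ) else 0) := by
            rw [Finset.sum_congr rfl fun p _ => expand p, Finset.sum_comm]
            exact Finset.sum_congr rfl fun i _ => Finset.sum_comm
        _ = ∑ i : Fin n, ∑ j : Fin n,
            ((Fintype.card (Fqk × Fqk) : ℤ)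
             - ((univ.filter fun p : Fqk × Fqk => F i p = 0).card : ℤ)
             - ((univ.filter fun p : Fqk × Fqk => F j p = 0).card : ℤ)
             + ((univ.filter fun p : Fqk × Fqk => F i p = 0 ∧ F j p = 0).card : ℤ)) := by
            refine Finset.sum_congr rfl fun i _ => Finset.sum_congr rfl fun j _ => ?_
            have key : ∀ p : Fqk × Fqk,
                (if F i p ≠ 0 then (1 : ℤ) else 0) * (if F j p ≠ 0 then (1 : ℤ) else 0)
                = 1 - (if F i p = 0 then (1 : ℤ) else 0) - (if F j p = 0 then (1 : ℤ) else 0)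
                  + (if F i p = 0 ∧ F j p = 0 then (1 : ℤ) else 0) := by
              intro p
              by_cases h1 : F i p = 0 <;> by_cases h2 : F j p = 0 <;> simp [h1, h2]
            rw [Finset.sum_congr rfl fun p _ => key p]
            rw [Finset.sum_add_distrib, Finset.sum_sub_distrib, Finset.sum_sub_distrib]
            simp [Finset.sum_boole, Finset.card_univ]
    rw [heq]
    refine Finset.dvd_sum fun i _ => Finset.dvd_sum fun j _ => ?_
    exact dvd_add (dvd_sub (dvd_sub hcardV (hZ1 (F i))) (hZ1 (F j))) (hZ2 (F i) (F j))
  -- each nonzero pair has weight w₁ or w₂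
  have hclass : ∀ p : Fqk × Fqk, p ≠ 0 → wt p = w₁ ∨ wt p = w₂ := by
    intro p hp
    have hmem : wt p ∈ {w : ℕ | ∃ u v : Fqk, ¬ (u = 0 ∧ v = 0) ∧
        hammingNorm (fun i : Fin n =>
          Algebra.trace Fq Fqk
            (u * β ^ (d * (i : ℕ)) + v * β ^ ((d + D) * (i : ℕ)))) = w} := by
      refine ⟨p.1, p.2, ?_, rfl⟩
      intro hzz
      exact hp (Prod.ext hzz.1 hzz.2)
    rw [hC] at hmem
    exact hmem
  -- zero weight at zero
  have hwt0 : wt 0 = 0 := by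
    have : (fun i : Fin n => F i (0 : Fqk × Fqk)) = 0 := by
      funext i; simp
    simp only [wt, this, hammingNorm_zero]
  -- the main identity
  have hsum : ∑ p : Fqk × Fqk, ((wt p : ℤ) - w₁) * ((wt p : ℤ) - w₂)
      = (w₁ : ℤ) * w₂ := by
    have hterm : ∀ p : Fqk × Fqk, ((wt p : ℤ) - w₁) * ((wt p : ℤ) - w₂)
        = if p = 0 then (w₁ : ℤ) * w₂ else 0 := by
      intro p
      by_cases hp : p = 0
      · rw [hp, hwt0]; simp
      · rcases hclass p hp with h | h <;> simp [hp, h]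
    rw [Finset.sum_congr rfl fun p _ => hterm p, Finset.sum_ite_eq' univ (0 : Fqk × Fqk)]
    simp
  have hexpand : ∑ p : Fqk × Fqk, ((wt p : ℤ) - w₁) * ((wt p : ℤ) - w₂)
      = ∑ p : Fqk × Fqk, (wt p : ℤ) ^ 2
        - ((w₁ : ℤ) + w₂) * ∑ p : Fqk × Fqk, (wt p : ℤ)
        + (w₁ : ℤ) * w₂ * (Fintype.card (Fqk × Fqk) : ℤ) := by
    have hpt : ∀ p : Fqk × Fqk, ((wt p : ℤ) - w₁) * ((wt p : ℤ) - w₂)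
        = (wt p : ℤ) ^ 2 - ((w₁ : ℤ) + w₂) * (wt p : ℤ) + (w₁ : ℤ) * w₂ := by
      intro p; ring
    rw [Finset.sum_congr rfl fun p _ => hpt p, Finset.sum_add_distrib,
      Finset.sum_sub_distrib, ← Finset.mul_sum, Finset.sum_const, Finset.card_univ,
      nsmul_eq_mul]
    ring
  -- conclude divisibility over ℤ
  have hdvdZ : (q : ℤ) ^ (2 * k - 2) ∣ (w₁ : ℤ) * w₂ * ((q : ℤ) ^ (2 * k) - 1) := by
    have hkey : (w₁ : ℤ) * w₂ * ((q : ℤ) ^ (2 * k) - 1)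
        = ((w₁ : ℤ) + w₂) * ∑ p : Fqk × Fqk, (wt p : ℤ)
          - ∑ p : Fqk × Fqk, (wt p : ℤ) ^ 2 := by
      have h1 := hexpand.symm.trans hsum
      have h2 : (Fintype.card (Fqk × Fqk) : ℤ) = (q : ℤ) ^ (2 * k) := by
        rw [hVcard]; push_cast; ring
      rw [h2] at h1
      linarith
    rw [hkey]
    exact dvd_sub (Dvd.dvd.mul_left hS1 _) hS2
  -- transfer to ℕ
  have hnat : q ^ (2 * k - 2) ∣ w₁ * w₂ * (q ^ (2 * k) - 1) := by
    have hcast : ((w₁ * w₂ * (q ^ (2 * k) - 1) : ℕ) : ℤ)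
        = (w₁ : ℤ) * w₂ * ((q : ℤ) ^ (2 * k) - 1) := by
      have h1 : (1 : ℕ) ≤ q ^ (2 * k) := Nat.one_le_pow _ _ (by omega)
      push_cast [h1]
      ring
    have := hdvdZ
    rw [← hcast] at this
    exact_mod_cast this
  rcases Nat.eq_zero_or_pos k with hk0 | hkpos
  · subst hk0
    simp
  -- coprimality
  have hcop : Nat.Coprime (q ^ (2 * k - 2)) (q ^ (2 * k) - 1) := by
    refine Nat.Coprime.pow_left _ ?_
    have hdvd1 : Nat.gcd q (q ^ (2 * k) - 1) ∣ q ^ (2 * k) :=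
      (Nat.gcd_dvd_left _ _).trans (dvd_pow_self q (by omega))
    have hdvd2 := Nat.gcd_dvd_right q (q ^ (2 * k) - 1)
    have h1 : (1 : ℕ) ≤ q ^ (2 * k) := Nat.one_le_pow _ _ (by omega)
    have := Nat.dvd_sub hdvd1 hdvd2
    rw [Nat.sub_sub_self h1] at this
    exact Nat.dvd_one.mp this
  exact Nat.Coprime.dvd_of_dvd_mul_right hcop hnat
end

section
/- Let $p$ be a prime, $\varepsilon \in \{1, -1\}$, and let $s, \theta, h, g, m$ be positive integers with $g \ge 2$, $h$ equal to the multiplicative order of $p$ modulo $g$, $h \ge 2\theta$, $m \mid (g-1)$, $m p^{s\theta} \equiv \varepsilon \pmod{g}$, and $m(g-m) = (g-1) p^{s(h-2\theta)}$. If $p^{2s(h-\theta)}$ divides $p^{s(h-\theta)} - \varepsilon m$ (as an integer), then $\varepsilon = 1$, $s = 1$, $h = 2\theta$, $g = p^\theta + 1$, and $m = p^\theta$; in particular $p^{s(h-\theta)} - \varepsilon m = 0$. -/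
set_option maxHeartbeats 4000000


/-- Case 1 in the proof of the main theorem: if `p^(2s(h-θ))` divides
`p^(s(h-θ)) - ε m`, then `ε = 1`, `s = 1`, `h = 2θ`, `g = p^θ + 1`, `m = p^θ`;
in particular `p^(s(h-θ)) - ε m = 0`. -/
theorem case_one_divisibility
    (p : ℕ) (hp : p.Prime) (ε : ℤ) (hε : ε = 1 ∨ ε = -1)
    (s θ h g m : ℕ)
    (hs : 0 < s) (hθ : 0 < θ) (hh : 0 < h) (hm : 0 < m)
    (hg : 2 ≤ g)
    (hord : h = orderOf (p : ZMod g))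
    (hhθ : 2 * θ ≤ h)
    (hmg : m ∣ g - 1)
    (hcong : (m : ℤ) * (p : ℤ) ^ (s * θ) ≡ ε [ZMOD (g : ℤ)])
    (hmgm : m * (g - m) = (g - 1) * p ^ (s * (h - 2 * θ)))
    (hdvd : (p : ℤ) ^ (2 * s * (h - θ)) ∣ (p : ℤ) ^ (s * (h - θ)) - ε * m) :
    ε = 1 ∧ s = 1 ∧ h = 2 * θ ∧ g = p ^ θ + 1 ∧ m = p ^ θ ∧
    (p : ℤ) ^ (s * (h - θ)) - ε * m = 0 := by
  have hp2 : 2 ≤ p := hp.two_le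
  have hmle : m ≤ g - 1 := Nat.le_of_dvd (by omega) hmg
  have hmlt : m < g := by omega
  -- g divides p^h - 1
  have hpow : (((p:ℤ) ^ h : ℤ) : ZMod g) = ((1:ℤ) : ZMod g) := by
    push_cast
    rw [hord]; exact pow_orderOf_eq_one _
  have hgdvdh : (g:ℤ) ∣ (p:ℤ)^h - 1 := by
    have := (ZMod.intCast_eq_intCast_iff _ _ _).mp hpow
    exact (dvd_sub_comm).mp this.dvd
  have hphn : 2 ≤ p ^ h := le_trans hp2 (Nat.le_self_pow hh.ne' p)
  have hph1 : (2:ℤ) ≤ (p:ℤ)^h := by exact_mod_cast hphn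
  have hgle : (g:ℤ) ≤ (p:ℤ)^h - 1 := Int.le_of_dvd (by linarith) hgdvdh
  obtain ⟨t, ht⟩ := hmg
  have ht1 : 1 ≤ t := by
    rcases Nat.eq_zero_or_pos t with h0 | h0
    · subst h0; simp at ht; omega
    · exact h0
  have htZ : (g:ℤ) - 1 = (m:ℤ) * t := by
    have h1 := ht
    zify [show 1 ≤ g by omega] at h1
    exact_mod_cast h1
  have hmgmZ : (m:ℤ) * ((g:ℤ) - m) = ((g:ℤ) - 1) * (p:ℤ) ^ (s*(h-2*θ)) := by
    zify [hmlt.le, show 1 ≤ g by omega] at hmgm; exact_mod_cast hmgm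
  have hm0 : (m:ℤ) ≠ 0 := by exact_mod_cast hm.ne'
  have key : (g:ℤ) - m = (t:ℤ) * (p:ℤ) ^ (s*(h-2*θ)) := by
    apply mul_left_cancel₀ hm0
    rw [hmgmZ, htZ]; ring
  have hsplit : s*(h-θ) = s*(h-2*θ) + s*θ := by
    have h1 : h - θ = (h - 2*θ) + θ := by omega
    rw [h1, Nat.mul_add]
  have hB1 : (1:ℤ) ≤ (p:ℤ)^(s*(h-2*θ)) := by
    exact_mod_cast Nat.one_le_pow _ _ (by omega)
  have hCge : (2:ℤ) ≤ (p:ℤ)^(s*θ) := by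
    have : 2 ≤ p ^ (s*θ) := le_trans hp2 (Nat.le_self_pow (by positivity) p)
    exact_mod_cast this
  have hA : (p:ℤ)^(s*(h-θ)) = (p:ℤ)^(s*(h-2*θ)) * (p:ℤ)^(s*θ) := by
    rw [hsplit, pow_add]
  have hAge2 : (2:ℤ) ≤ (p:ℤ)^(s*(h-θ)) := by nlinarith
  have hmnn : (0:ℤ) ≤ (m:ℤ) := by positivity
  have h2aeq : (p:ℤ)^(2*s*(h-θ)) = (p:ℤ)^(s*(h-θ)) * (p:ℤ)^(s*(h-θ)) := by
    rw [show 2*s*(h-θ) = s*(h-θ) + s*(h-θ) by ring, pow_add]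
  -- t = 1
  have htone : t = 1 := by
    by_contra htne
    have ht2 : (2:ℤ) ≤ (t:ℤ) := by exact_mod_cast (by omega : 2 ≤ t)
    have hb : (m:ℤ) * ((t:ℤ)-1) = (t:ℤ) * (p:ℤ)^(s*(h-2*θ)) - 1 := by
      linear_combination key - htZ
    have hmB : (m:ℤ) ≤ 2 * (p:ℤ)^(s*(h-2*θ)) - 1 := by
      have e : (2 * (p:ℤ)^(s*(h-2*θ)) - 1 - m) * ((t:ℤ)-1)
          = ((p:ℤ)^(s*(h-2*θ)) - 1) * ((t:ℤ)-2) := by linear_combination -hb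
      have hnn : 0 ≤ (2 * (p:ℤ)^(s*(h-2*θ)) - 1 - m) * ((t:ℤ)-1) := by
        rw [e]; exact mul_nonneg (by linarith) (by linarith)
      by_contra hlt
      push_neg at hlt
      nlinarith
    have hmA : (m:ℤ) < (p:ℤ)^(s*(h-θ)) := by
      nlinarith [mul_le_mul_of_nonneg_left hCge (by linarith : (0:ℤ) ≤ (p:ℤ)^(s*(h-2*θ)))]
    have hane : (p:ℤ)^(s*(h-θ)) - ε * m ≠ 0 := by
      intro h0
      rcases hε with rfl | rfl
      · rw [one_mul, sub_eq_zero] at h0; rw [h0] at hmA; exact lt_irrefl _ hmA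
      · linarith [h0, hmnn, hAge2]
    have h2a : (p:ℤ)^(2*s*(h-θ)) ≤ |(p:ℤ)^(s*(h-θ)) - ε*m| :=
      Int.le_of_dvd (abs_pos.mpr hane) ((dvd_abs _ _).mpr hdvd)
    have habs : |(p:ℤ)^(s*(h-θ)) - ε*m| ≤ (p:ℤ)^(s*(h-θ)) + m := by
      rcases hε with rfl | rfl <;> rw [abs_le] <;> constructor <;> linarith [hmnn, hAge2]
    rw [h2aeq] at h2a
    nlinarith [h2a, habs, hmA, hAge2]
  subst htone
  have hmg1 : m = g - 1 := by omega
  have hmZ : (m:ℤ) = (g:ℤ) - 1 := by push_cast at htZ; linarith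
  push_cast at key
  have hpb1 : (p:ℤ)^(s*(h-2*θ)) = 1 := by linarith [key, htZ]
  have hb0 : s * (h - 2*θ) = 0 := by
    by_contra hb
    have h2 : (2:ℤ) ≤ (p:ℤ) ^ (s*(h-2*θ)) := by
      exact_mod_cast le_trans hp2 (Nat.le_self_pow hb p)
    linarith
  have hh2 : h = 2*θ := by
    rcases Nat.mul_eq_zero.mp hb0 with h' | h' <;> omega
  subst hh2
  have hθθ : 2*θ - θ = θ := by omega
  rw [hθθ] at hdvd hAge2 hA h2aeq ⊢
  -- congruence: g ∣ p^(sθ) + ε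
  have hgd : (g:ℤ) ∣ (p:ℤ)^(s*θ) + ε := by
    obtain ⟨k, hk⟩ := hcong.dvd
    refine ⟨k + (p:ℤ)^(s*θ), ?_⟩
    rw [hmZ] at hk
    linear_combination hk
  rcases hε with rfl | rfl
  · -- ε = 1
    have hgleX : (g:ℤ) ≤ (p:ℤ)^(s*θ) + 1 := Int.le_of_dvd (by linarith) hgd
    have hc0 : (p:ℤ)^(s*θ) - 1 * m = 0 := by
      by_contra hne
      have hpos : 0 < (p:ℤ)^(s*θ) - 1*m := by
        rcases lt_or_gt_of_ne hne with hlt | hgt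
        · exfalso; nlinarith [hmZ, hgleX]
        · exact hgt
      have := Int.le_of_dvd hpos hdvd
      rw [h2aeq] at this
      nlinarith [hmZ]
    have hmX : (m:ℤ) = (p:ℤ)^(s*θ) := by linarith [hc0]
    have hgX : (g:ℤ) = (p:ℤ)^(s*θ) + 1 := by linarith [hmZ]
    -- s = 1
    have hXlt : (p:ℤ)^(s*θ) < (p:ℤ)^(2*θ) := by
      linarith [hgle, hgX]
    have hslt : s*θ < 2*θ := by
      by_contra hge
      have : (p:ℤ)^(2*θ) ≤ (p:ℤ)^(s*θ) :=
        pow_le_pow_right₀ (by exact_mod_cast hp.one_lt.le) (by omega)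
      linarith
    have hs1 : s = 1 := by
      by_contra hsne
      have : 2*θ ≤ s*θ := Nat.mul_le_mul_right θ (by omega)
      omega
    subst hs1
    have hmnat : m = p ^ θ := by
      have : (m:ℤ) = ((p^θ : ℕ) : ℤ) := by push_cast; rw [hmX, one_mul]
      exact_mod_cast this
    have hgnat : g = p ^ θ + 1 := by omega
    refine ⟨rfl, rfl, rfl, hgnat, hmnat, ?_⟩
    rw [one_mul] at hc0 ⊢
    exact hc0
  · -- ε = -1 : contradiction
    exfalso
    have hX1 : ((p:ℕ) : ZMod g)^(s*θ) = 1 := by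
      have hgd' : (g:ℤ) ∣ (p:ℤ)^(s*θ) - 1 := by
        obtain ⟨k, hk⟩ := hgd; exact ⟨k, by linarith⟩
      have hmod : (((p:ℤ)^(s*θ) : ℤ) : ZMod g) = ((1:ℤ) : ZMod g) := by
        rw [ZMod.intCast_eq_intCast_iff]
        exact (Int.ModEq.symm (Int.modEq_iff_dvd.mpr (by simpa using hgd')))
      push_cast at hmod
      exact_mod_cast hmod
    have hdord : orderOf ((p:ℕ) : ZMod g) ∣ s*θ := orderOf_dvd_of_pow_eq_one hX1
    rw [← hord] at hdord
    have h2s : 2*θ ≤ s*θ := Nat.le_of_dvd (by positivity) hdord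
    have hXY : (p:ℤ)^(2*θ) ≤ (p:ℤ)^(s*θ) :=
      pow_le_pow_right₀ (by exact_mod_cast hp.one_lt.le) h2s
    have hY4 : (4:ℤ) ≤ (p:ℤ)^(2*θ) := by
      have : 4 ≤ p^(2*θ) := by
        calc 4 = 2^2 := by norm_num
        _ ≤ p^2 := Nat.pow_le_pow_left hp2 2
        _ ≤ p^(2*θ) := Nat.pow_le_pow_right (by omega) (by omega)
      exact_mod_cast this
    have hcpos : 0 < (p:ℤ)^(s*θ) - (-1) * m := by linarith [hAge2, hmnn]
    have hle := Int.le_of_dvd hcpos hdvd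
    rw [h2aeq] at hle
    have hmle2 : (m:ℤ) ≤ (p:ℤ)^(s*θ) - 2 := by linarith [hmZ, hgle, hXY]
    have hexp : ((p:ℤ)^(s*θ) - 1) * ((p:ℤ)^(s*θ) - 1)
        = (p:ℤ)^(s*θ) * (p:ℤ)^(s*θ) - 2*(p:ℤ)^(s*θ) + 1 := by ring
    linarith [hle, hmle2, hexp, mul_self_nonneg ((p:ℤ)^(s*θ) - 1)]
end

section
/- Let $p$ be a prime, $\varepsilon \in \{1, -1\}$, and let $s, \theta, h, g, m$ be positive integers with $g \ge 2$, $h$ equal to the multiplicative order of $p$ modulo $g$, $2\theta \le h$ and $\theta < h$, $m \mid (g-1)$, $m p^{s\theta} \equiv \varepsilon \pmod{g}$, and $m(g-m) = (g-1) p^{s(h-2\theta)}$. If $p^{s(h-\theta)} - \varepsilon m + \varepsilon g \ne 0$, then $p^{2s(h-\theta)}$ does not divide $p^{s(h-\theta)} - \varepsilon m + \varepsilon g$. -/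
/-- Case 2 in the proof of the main theorem: if `p^(s(h-θ)) - ε m + ε g ≠ 0`,
then `p^(2s(h-θ))` does not divide `p^(s(h-θ)) - ε m + ε g`. -/
theorem case_two_no_divisibility
    (p : ℕ) (hp : p.Prime) (ε : ℤ) (hε : ε = 1 ∨ ε = -1)
    (s θ h g m : ℕ)
    (hs : 0 < s) (hθ : 0 < θ) (hh : 0 < h) (hm : 0 < m)
    (hg : 2 ≤ g)
    (hord : h = orderOf (p : ZMod g))
    (hhθ : 2 * θ ≤ h) (hθh : θ < h)
    (hmg : m ∣ g - 1)
    (hcong : (m : ℤ) * (p : ℤ) ^ (s * θ) ≡ ε [ZMOD (g : ℤ)])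
    (hmgm : m * (g - m) = (g - 1) * p ^ (s * (h - 2 * θ)))
    (hne : (p : ℤ) ^ (s * (h - θ)) - ε * m + ε * g ≠ 0) :
    ¬ ((p : ℤ) ^ (2 * s * (h - θ)) ∣ (p : ℤ) ^ (s * (h - θ)) - ε * m + ε * g) := by
  intro hdvd
  have hp2 : 2 ≤ p := hp.two_le
  have hm_le : m ≤ g - 1 := Nat.le_of_dvd (by omega) hmg
  set K := s * (h - θ) with hK
  -- p^K divides N, hence divides ε*(g - m)
  have hpK : (p : ℤ) ^ K ∣ (p : ℤ) ^ K - ε * m + ε * g :=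
    dvd_trans (pow_dvd_pow _ (by rw [hK, mul_assoc]; exact Nat.le_mul_of_pos_left _ two_pos)) hdvd
  have hdvd2 : (p : ℤ) ^ K ∣ ε * ((g : ℤ) - m) := by
    have heq : ε * ((g : ℤ) - m) = ((p : ℤ) ^ K - ε * m + ε * g) - (p : ℤ) ^ K := by ring
    rw [heq]
    exact dvd_sub hpK dvd_rfl
  have hdvd3 : (p : ℤ) ^ K ∣ ((g : ℤ) - m) := by
    have heq : (g : ℤ) - m = ε * (ε * ((g : ℤ) - m)) := by
      rcases hε with rfl | rfl <;> ring
    rw [heq]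
    exact hdvd2.mul_left ε
  have hgm_pos : (0 : ℤ) < (g : ℤ) - m := by
    have h1 : (m : ℤ) < g := by exact_mod_cast (by omega : m < g)
    linarith
  have hle : (p : ℤ) ^ K ≤ (g : ℤ) - m := Int.le_of_dvd hgm_pos hdvd3
  -- m*(g-m) = (g-1)*p^(s*(h-2θ)) in ℤ
  have hmgmZ : (m : ℤ) * ((g : ℤ) - m) = ((g : ℤ) - 1) * (p : ℤ) ^ (s * (h - 2 * θ)) := by
    have := congrArg (Nat.cast : ℕ → ℤ) hmgm
    push_cast [Nat.cast_sub (by omega : m ≤ g), Nat.cast_sub (by omega : 1 ≤ g)] at this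
    exact this
  -- K = s*θ + s*(h - 2θ)
  have hKsplit : K = s * θ + s * (h - 2 * θ) := by
    rw [hK]
    have : h - θ = θ + (h - 2 * θ) := by omega
    rw [this, Nat.mul_add]
  have hpow_pos : (0 : ℤ) < (p : ℤ) ^ (s * (h - 2 * θ)) := by positivity
  -- deduce g - 1 ≥ m * p^(s*θ)
  have hge : (m : ℤ) * (p : ℤ) ^ (s * θ) ≤ (g : ℤ) - 1 := by
    have h1 : (m : ℤ) * (p : ℤ) ^ K ≤ (m : ℤ) * ((g : ℤ) - m) := by
      apply mul_le_mul_of_nonneg_left hle (by positivity)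
    rw [hmgmZ, hKsplit, pow_add, ← mul_assoc] at h1
    exact le_of_mul_le_mul_right h1 hpow_pos
  have hpst : (2 : ℤ) ≤ (p : ℤ) ^ (s * θ) := by
    calc (2 : ℤ) ≤ (p : ℤ) := by exact_mod_cast hp2
    _ = (p : ℤ) ^ 1 := (pow_one _).symm
    _ ≤ (p : ℤ) ^ (s * θ) := by
        apply pow_le_pow_right₀ (by exact_mod_cast hp.one_lt.le)
        exact Nat.one_le_iff_ne_zero.mpr (by positivity)
  have hmpst : (2 : ℤ) ≤ (m : ℤ) * (p : ℤ) ^ (s * θ) := by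
    nlinarith [hpst, (by exact_mod_cast hm : (1:ℤ) ≤ (m:ℤ))]
  -- congruence: g ∣ ε - m*p^(sθ)
  have hdvdg : (g : ℤ) ∣ ε - (m : ℤ) * (p : ℤ) ^ (s * θ) := hcong.dvd
  rcases hε with rfl | rfl
  · -- ε = 1: g ∣ m*p^(sθ) - 1 with 1 ≤ m*p^(sθ)-1 ≤ g-2, contradiction
    have hdvd' : (g : ℤ) ∣ (m : ℤ) * (p : ℤ) ^ (s * θ) - 1 := by
      have heq : (m : ℤ) * (p : ℤ) ^ (s * θ) - 1 = -((1:ℤ) - (m : ℤ) * (p : ℤ) ^ (s * θ)) := by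
        ring
      rw [heq]
      exact dvd_neg.mpr hdvdg
    have hle' : (g : ℤ) ≤ (m : ℤ) * (p : ℤ) ^ (s * θ) - 1 :=
      Int.le_of_dvd (by linarith) hdvd'
    linarith
  · -- ε = -1: g ∣ m*p^(sθ) + 1, so m*p^(sθ) = g - 1
    have hdvd' : (g : ℤ) ∣ (m : ℤ) * (p : ℤ) ^ (s * θ) + 1 := by
      have : (m : ℤ) * (p : ℤ) ^ (s * θ) + 1 = -((-1 : ℤ) - (m : ℤ) * (p : ℤ) ^ (s * θ)) := by ring
      rw [this]
      exact dvd_neg.mpr hdvdg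
    have hle' : (g : ℤ) ≤ (m : ℤ) * (p : ℤ) ^ (s * θ) + 1 :=
      Int.le_of_dvd (by linarith) hdvd'
    have heq1 : (m : ℤ) * (p : ℤ) ^ (s * θ) = (g : ℤ) - 1 := by linarith
    -- then m*(g-m) = m * p^K, so g - m = p^K
    have heq2 : (m : ℤ) * ((g : ℤ) - m) = (m : ℤ) * (p : ℤ) ^ K := by
      rw [hmgmZ, ← heq1, hKsplit, pow_add]; ring
    have heq3 : (g : ℤ) - m = (p : ℤ) ^ K :=
      mul_left_cancel₀ (by exact_mod_cast hm.ne' : (m : ℤ) ≠ 0) heq2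
    apply hne
    linarith
end

section
/- There do not exist a prime power $q$ and positive integers $k$ and $d$ with $d \mid (q-1)$ and $(q-1)/d \ge 3$ such that $(q^k-1)\Big(\frac{q-1}{d}\Big)^2 q^k = \Big(\frac{(q^k-1)(q-1)}{d}\Big)^2 + \frac{(q^k-1)(q-1)}{d} + 2(q-1)\Big(\frac{q-1}{d} - 1\Big)$. Indeed, this equation forces $\frac{(q^k-1)(q-1)}{d}$ to divide $2(q-1)\big(\frac{q-1}{d} - 1\big)$, which is only possible when $k = 1$ and $(q-1)/d$ divides $2$. -/
lemma no_solution_weight_equation_key : ∀ q k d : ℕ, IsPrimePow q → 1 ≤ k → 0 < d → d ∣ q - 1 →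
    3 ≤ (q - 1) / d →
    (q ^ k - 1) * ((q - 1) / d) ^ 2 * q ^ k =
      ((q ^ k - 1) * ((q - 1) / d)) ^ 2 + (q ^ k - 1) * ((q - 1) / d) +
        2 * (q - 1) * ((q - 1) / d - 1) → False := by
  intro q k d hq hk hd hdvd hm heq
  have hq2 : 2 ≤ q := hq.two_le
  set m := (q - 1) / d with hmdef
  set N := q ^ k - 1 with hN
  have hqk : q ≤ q ^ k := Nat.le_self_pow (by omega) q
  have hNe : q - 1 ≤ N := by omega
  have hqkN : q ^ k = N + 1 := by omega
  have he1 : 1 ≤ q - 1 := by omega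
  obtain ⟨mm, hmm⟩ : ∃ mm, m = mm + 1 := ⟨m - 1, by omega⟩
  rw [hqkN, hmm] at heq
  have hm1 : (mm + 1) - 1 = mm := by omega
  rw [hm1] at heq
  have hmm2 : 2 ≤ mm := by omega
  -- heq : N * (mm+1)^2 * (N+1) = (N*(mm+1))^2 + N*(mm+1) + 2*(q-1)*mm
  have hNm : N * (mm + 1) * mm = 2 * (q - 1) * mm := by ring_nf; ring_nf at heq; omega
  have h2 : N * (mm + 1) = 2 * (q - 1) := Nat.eq_of_mul_eq_mul_right (by omega) hNm
  nlinarith [hNe, hmm2, he1]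

/-- There do not exist a prime power `q` and positive integers `k`, `d` with
`d ∣ q-1` and `(q-1)/d ≥ 3` satisfying
`(q^k-1)((q-1)/d)² q^k = ((q^k-1)(q-1)/d)² + (q^k-1)(q-1)/d + 2(q-1)((q-1)/d - 1)`.
Indeed, the equation forces `(q^k-1)(q-1)/d` to divide `2(q-1)((q-1)/d - 1)`,
which is only possible when `k = 1` and `(q-1)/d ∣ 2`. -/
theorem no_solution_weight_equation :
    (¬ ∃ q k d : ℕ, IsPrimePow q ∧ 1 ≤ k ∧ 0 < d ∧ d ∣ q - 1 ∧
      3 ≤ (q - 1) / d ∧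
      (q ^ k - 1) * ((q - 1) / d) ^ 2 * q ^ k =
        ((q ^ k - 1) * ((q - 1) / d)) ^ 2 + (q ^ k - 1) * ((q - 1) / d) +
          2 * (q - 1) * ((q - 1) / d - 1)) ∧
    (∀ q k d : ℕ, IsPrimePow q → 1 ≤ k → 0 < d → d ∣ q - 1 →
      3 ≤ (q - 1) / d →
      (q ^ k - 1) * ((q - 1) / d) ^ 2 * q ^ k =
        ((q ^ k - 1) * ((q - 1) / d)) ^ 2 + (q ^ k - 1) * ((q - 1) / d) +
          2 * (q - 1) * ((q - 1) / d - 1) →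
      ((q ^ k - 1) * ((q - 1) / d) ∣ 2 * (q - 1) * ((q - 1) / d - 1) ∧
        k = 1 ∧ (q - 1) / d ∣ 2)) := by
  constructor
  · rintro ⟨q, k, d, h1, h2, h3, h4, h5, h6⟩
    exact no_solution_weight_equation_key q k d h1 h2 h3 h4 h5 h6
  · intro q k d h1 h2 h3 h4 h5 h6
    exact (no_solution_weight_equation_key q k d h1 h2 h3 h4 h5 h6).elim
end
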